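/- arXiv:2012.09848 — 7 statements merged into one kernel-verified Lean document; each statement's English description precedes it below -/
import Mathlib

section
/- Let (X,d) be a proper geodesic metric space which is δ-hyperbolic for some δ ≥ 0, and let f : X → X be a non-expanding map with d(z₀, f^n(z₀))/n → c, c > 0. Let (z_n)_{n≥0} be a backward orbit with bounded step, i.e. f(z_{n+1}) = z_n for all n and σ₁ := sup_n d(z_n, z_{n+1}) < ∞, with z₀ as above. Define the complete orbit (x_n)_{n∈ℤ} by x_n = z_{−n} for n ≤ 0 and x_n = f^n(z₀) for n ≥ 0. Then c·|n−m| ≤ d(x_n, x_m) ≤ σ₁·|n−m| for all n,m ∈ ℤ, so (x_n) is a discrete quasi-geodesic line, and there exist a geodesic line σ : ℝ → X and R > 0 such that every x_n lies within distance R of the image of σ. -/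
open Filter Metric Topology

/-- A geodesic ray: `d(γ s, γ t) = |s - t|` for all `s, t ≥ 0`. -/
def IsGeodesicRay {X : Type*} [MetricSpace X] (γ : ℝ → X) : Prop :=
  ∀ s t : ℝ, 0 ≤ s → 0 ≤ t → dist (γ s) (γ t) = |s - t|

/-- A geodesic metric space: any two points are joined by a geodesic segment. -/
def IsGeodesicSpace (X : Type*) [MetricSpace X] : Prop :=
  ∀ x y : X, ∃ γ : ℝ → X, γ 0 = x ∧ γ (dist x y) = y ∧
    ∀ s ∈ Set.Icc (0 : ℝ) (dist x y), ∀ t ∈ Set.Icc (0 : ℝ) (dist x y),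
      dist (γ s) (γ t) = |s - t|

/-- The Gromov product `(x|y)_p = (d(x,p) + d(y,p) - d(x,y))/2`. -/
noncomputable def gromovProduct {X : Type*} [MetricSpace X] (p x y : X) : ℝ :=
  (dist x p + dist y p - dist x y) / 2

/-- `δ`-hyperbolicity: `(x|y)_p ≥ min((x|z)_p, (z|y)_p) - δ` for all `x, y, z, p`. -/
def IsDeltaHyperbolic (X : Type*) [MetricSpace X] (δ : ℝ) : Prop :=
  ∀ p x y z : X, min (gromovProduct p x z) (gromovProduct p z y) - δ ≤ gromovProduct p x y

/-- Two geodesic rays are strongly asymptotic if `d(γ(t+T), σ(t+S)) → 0` for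
some `T, S ≥ 0`. -/
def StronglyAsymptotic {X : Type*} [MetricSpace X] (γ σ : ℝ → X) : Prop :=
  ∃ T S : ℝ, 0 ≤ T ∧ 0 ≤ S ∧
    Tendsto (fun t => dist (γ (t + T)) (σ (t + S))) atTop (nhds 0)

/-- Two geodesic rays are asymptotic if `sup_{t ≥ 0} d(γ t, σ t) < ∞`. -/
def AsymptoticRays {X : Type*} [MetricSpace X] (γ σ : ℝ → X) : Prop :=
  ∃ M : ℝ, ∀ t : ℝ, 0 ≤ t → dist (γ t) (σ t) ≤ M

/-- A space has approaching geodesics if asymptotic geodesic rays are strongly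
asymptotic. -/
def ApproachingGeodesics (X : Type*) [MetricSpace X] : Prop :=
  ∀ γ σ : ℝ → X, IsGeodesicRay γ → IsGeodesicRay σ →
    AsymptoticRays γ σ → StronglyAsymptotic γ σ

/-- The geodesic region of radius `R` around the ray `γ`. -/
def geodesicRegion {X : Type*} [MetricSpace X] (γ : ℝ → X) (R : ℝ) : Set X :=
  {x | ∃ t : ℝ, 0 ≤ t ∧ dist x (γ t) < R}


section Helpers

variable {X : Type*} [MetricSpace X]

lemma abs_min_sub_min_le_abs' (a b c : ℝ) : |min a c - min b c| ≤ |a - b| := by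
  rcases le_total a c with h1 | h1 <;> rcases le_total b c with h2 | h2
  · rw [min_eq_left h1, min_eq_left h2]
  · rw [min_eq_left h1, min_eq_right h2]
    rcases abs_cases (a - b) with ⟨h3, h4⟩ | ⟨h3, h4⟩ <;>
      rcases abs_cases (a - c) with ⟨h5, h6⟩ | ⟨h5, h6⟩ <;> linarith
  · rw [min_eq_right h1, min_eq_left h2]
    rcases abs_cases (a - b) with ⟨h3, h4⟩ | ⟨h3, h4⟩ <;>
      rcases abs_cases (c - b) with ⟨h5, h6⟩ | ⟨h5, h6⟩ <;> linarith
  · rw [min_eq_right h1, min_eq_right h2]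
    simp

lemma gp_le_left (p a b : X) : gromovProduct p a b ≤ dist a p := by
  have h1 := dist_triangle b a p
  have h2 := dist_comm b a
  unfold gromovProduct
  linarith

lemma gp_le_right (p a b : X) : gromovProduct p a b ≤ dist b p := by
  have h1 := dist_triangle a b p
  unfold gromovProduct
  linarith

lemma gp_self (p a : X) : gromovProduct p a a = dist a p := by
  simp [gromovProduct]

lemma chainC (δ : ℝ) (hδ : 0 ≤ δ) (hhyp : IsDeltaHyperbolic X δ) (w : X) :
    ∀ N : ℕ, ∀ y : ℕ → X, ∀ μ : ℕ → ℝ, ∀ B : ℝ,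
      (∀ t, t < N → 0 < μ t) → (∑ t ∈ Finset.range N, μ t) ≤ 1 →
      (∀ t, t < N → B ≤ gromovProduct w (y t) (y (t + 1)) + 2 * δ * Real.logb 2 (μ t)) →
      1 ≤ N → B - 2 * δ ≤ gromovProduct w (y 0) (y N) := by
  intro N
  induction N using Nat.strong_induction_on with
  | _ N IH =>
    intro y μ B hpos hsum hB hN
    classical
    have hμle1 : ∀ t, t < N → μ t ≤ 1 := by
      intro t ht
      refine le_trans ?_ hsum
      exact Finset.single_le_sum (f := μ)
        (fun i hi => (hpos i (Finset.mem_range.mp hi)).le) (Finset.mem_range.mpr ht)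
    have hB1 : ∀ t, t < N → B ≤ gromovProduct w (y t) (y (t + 1)) := by
      intro t ht
      have h1 := hB t ht
      have h2 : Real.logb 2 (μ t) ≤ 0 := by
        rw [Real.logb]
        apply div_nonpos_of_nonpos_of_nonneg
        · exact Real.log_nonpos (hpos t ht).le (hμle1 t ht)
        · exact (Real.log_pos one_lt_two).le
      nlinarith
    rcases eq_or_lt_of_le hN with h1 | h2
    · -- N = 1
      have hN1 : N = 1 := h1.symm
      subst hN1
      have := hB1 0 (by norm_num)
      linarith
    -- N ≥ 2
    set P : ℕ → Prop := fun i => (∑ t ∈ Finset.range i, μ t) ≤ 1/2 with hPdef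
    have hP0 : P 0 := by simp [hPdef]
    set j := Nat.findGreatest P (N - 1) with hjdef
    have hj : P j := Nat.findGreatest_spec (Nat.zero_le _) hP0
    have hjle : j ≤ N - 1 := Nat.findGreatest_le _
    have hjN : j < N := lt_of_le_of_lt hjle (by omega)
    -- left bound
    have hy0 : B ≤ dist (y 0) w := le_trans (hB1 0 (by omega)) (gp_le_left w (y 0) (y 1))
    have hleft : 1 ≤ j → B ≤ gromovProduct w (y 0) (y j) := by
      intro h1j
      have hIH := IH j hjN y (fun t => 2 * μ t) (B + 2 * δ)
        (fun t ht => by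
          show (0:ℝ) < 2 * μ t
          have := hpos t (lt_of_lt_of_le ht hjN.le); linarith)
        (by
          show (∑ t ∈ Finset.range j, 2 * μ t) ≤ 1
          rw [← Finset.mul_sum]
          have hjj : (∑ t ∈ Finset.range j, μ t) ≤ 1/2 := hj
          linarith)
        (by
          intro t ht
          show B + 2*δ ≤ gromovProduct w (y t) (y (t + 1)) + 2 * δ * Real.logb 2 (2 * μ t)
          have htN : t < N := lt_of_lt_of_le ht hjN.le
          have h3 := hB t htN
          have hlog : Real.logb 2 (2 * μ t) = 1 + Real.logb 2 (μ t) := by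
            rw [Real.logb_mul two_ne_zero (hpos t htN).ne', Real.logb_self_eq_one one_lt_two]
          rw [hlog]
          nlinarith)
        h1j
      linarith
    have hmid : B ≤ gromovProduct w (y j) (y (j + 1)) := hB1 j hjN
    have hL : B ≤ gromovProduct w (y 0) (y j) := by
      rcases Nat.eq_zero_or_pos j with hj0 | hj1
      · rw [hj0, gp_self]
        exact hy0
      · exact hleft hj1
    have hright : j + 1 < N → B ≤ gromovProduct w (y (j + 1)) (y N) := by
      intro hj1N
      have hnot : ¬ P (j + 1) := Nat.findGreatest_is_greatest (hjdef ▸ Nat.lt_succ_self j) (by omega)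
      have hhead : (1:ℝ)/2 < ∑ t ∈ Finset.range (j+1), μ t := by
        simpa [hPdef] using hnot
      have hsplit : (∑ t ∈ Finset.range (j+1), μ t) + (∑ t ∈ Finset.Ico (j+1) N, μ t)
          = ∑ t ∈ Finset.range N, μ t := by
        simp only [Finset.range_eq_Ico]
        exact Finset.sum_Ico_consecutive μ (by omega) (by omega)
      have htail : (∑ s ∈ Finset.range (N - (j+1)), μ (j+1+s)) ≤ 1/2 := by
        have := Finset.sum_Ico_eq_sum_range (f := μ) (m := j+1) (n := N)
        rw [← this]
        linarith
      have hIH := IH (N - (j+1)) (by omega) (fun s => y (j+1+s)) (fun s => 2 * μ (j+1+s))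
        (B + 2 * δ)
        (fun s hs => by
          show (0:ℝ) < 2 * μ (j+1+s)
          have := hpos (j+1+s) (by omega); linarith)
        (by
          show (∑ s ∈ Finset.range (N-(j+1)), 2 * μ (j+1+s)) ≤ 1
          rw [← Finset.mul_sum]
          linarith)
        (by
          intro s hs
          show B + 2*δ ≤ gromovProduct w (y (j+1+s)) (y (j+1+(s+1))) + 2 * δ * Real.logb 2 (2 * μ (j+1+s))
          have htN : j+1+s < N := by omega
          have h3 := hB (j+1+s) htN
          have hidx : j+1+(s+1) = (j+1+s)+1 := by omega
          rw [hidx]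
          have hlog : Real.logb 2 (2 * μ (j+1+s)) = 1 + Real.logb 2 (μ (j+1+s)) := by
            rw [Real.logb_mul two_ne_zero (hpos _ htN).ne', Real.logb_self_eq_one one_lt_two]
          rw [hlog]
          nlinarith)
        (by omega)
      have hidx2 : j+1+(N-(j+1)) = N := by omega
      have hIH' : B + 2*δ - 2*δ ≤ gromovProduct w (y (j+1+0)) (y (j+1+(N-(j+1)))) := hIH
      rw [hidx2] at hIH'
      norm_num at hIH'
      linarith
    by_cases hcase : j + 1 = N
    · have h4 := hhyp w (y 0) (y N) (y j)
      have hm : B ≤ gromovProduct w (y j) (y N) := by rw [← hcase]; exact hmid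
      have : min (gromovProduct w (y 0) (y j)) (gromovProduct w (y j) (y N)) ≥ B :=
        le_min hL hm
      linarith
    · have hj1N : j + 1 < N := by omega
      have h4 := hhyp w (y 0) (y N) (y (j+1))
      have h5 := hhyp w (y 0) (y (j+1)) (y j)
      have hmin5 : min (gromovProduct w (y 0) (y j)) (gromovProduct w (y j) (y (j+1))) ≥ B :=
        le_min hL hmid
      have h6 : B - δ ≤ gromovProduct w (y 0) (y (j+1)) := by linarith
      have hmin4 : min (gromovProduct w (y 0) (y (j+1))) (gromovProduct w (y (j+1)) (y N)) ≥ B - δ :=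
        le_min h6 (by linarith [hright hj1N])
      linarith

lemma sum_pow_tsub_le (q : ℝ) (h0 : 0 ≤ q) (h1 : q < 1) (u0 M : ℕ) :
    (∑ v ∈ Finset.range M, q ^ (v - u0)) ≤ (u0 : ℝ) + 1/(1-q) := by
  classical
  have hsplit := Finset.sum_filter_add_sum_filter_not (Finset.range M)
    (fun v => v < u0) (fun v => q ^ (v - u0))
  have hA : (∑ v ∈ (Finset.range M).filter (fun v => v < u0), q ^ (v - u0)) ≤ (u0:ℝ) := by
    have hterm : ∀ v ∈ (Finset.range M).filter (fun v => v < u0), q ^ (v - u0) ≤ 1 := by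
      intro v hv
      rcases Finset.mem_filter.mp hv with ⟨_, hvu⟩
      have hz : v - u0 = 0 := by omega
      rw [hz, pow_zero]
    calc (∑ v ∈ (Finset.range M).filter (fun v => v < u0), q ^ (v - u0))
        ≤ ∑ _v ∈ (Finset.range M).filter (fun v => v < u0), (1:ℝ) :=
          Finset.sum_le_sum hterm
      _ = ((Finset.range M).filter (fun v => v < u0)).card := by simp
      _ ≤ (u0 : ℝ) := by
          have hsub : (Finset.range M).filter (fun v => v < u0) ⊆ Finset.range u0 := by
            intro v hv
            rcases Finset.mem_filter.mp hv with ⟨_, hvu⟩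
            exact Finset.mem_range.mpr hvu
          have := Finset.card_le_card hsub
          rw [Finset.card_range] at this
          exact_mod_cast this
  have hB : (∑ v ∈ (Finset.range M).filter (fun v => ¬ v < u0), q ^ (v - u0)) ≤ 1/(1-q) := by
    have hsub : (Finset.range M).filter (fun v => ¬ v < u0) ⊆ Finset.Ico u0 M := by
      intro v hv
      rcases Finset.mem_filter.mp hv with ⟨hvr, hvu⟩
      exact Finset.mem_Ico.mpr ⟨by omega, Finset.mem_range.mp hvr⟩
    have h2 : (∑ v ∈ (Finset.range M).filter (fun v => ¬ v < u0), q ^ (v - u0))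
        ≤ ∑ v ∈ Finset.Ico u0 M, q ^ (v - u0) :=
      Finset.sum_le_sum_of_subset_of_nonneg hsub (fun i _ _ => pow_nonneg h0 _)
    have h3 : (∑ v ∈ Finset.Ico u0 M, q ^ (v - u0)) = ∑ k ∈ Finset.range (M - u0), q ^ k := by
      rw [Finset.sum_Ico_eq_sum_range]
      refine Finset.sum_congr rfl (fun k _ => ?_)
      congr 1
      omega
    have h4 : (∑ k ∈ Finset.range (M - u0), q ^ k) ≤ 1/(1-q) := by
      rw [geom_sum_eq h1.ne]
      have h1q : (0:ℝ) < 1 - q := by linarith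
      have hpow : 0 ≤ q ^ (M - u0) := pow_nonneg h0 _
      have heq : (q ^ (M - u0) - 1)/(q - 1) = (1 - q ^ (M-u0))/(1-q) := by
        rw [div_eq_div_iff (by linarith) (by linarith)]
        ring
      rw [heq]
      exact div_le_div_of_nonneg_right (by linarith) h1q.le
    linarith
  linarith

lemma natdist_cast (t τ : ℕ) : ((Nat.dist t τ : ℕ) : ℝ) = |(t:ℝ) - (τ:ℝ)| := by
  rcases le_total t τ with h | h
  · rw [Nat.dist_eq_sub_of_le h, Nat.cast_sub h, abs_of_nonpos (by
      have : (t:ℝ) ≤ τ := by exact_mod_cast h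
      linarith)]
    ring
  · rw [Nat.dist_comm, Nat.dist_eq_sub_of_le h, Nat.cast_sub h, abs_of_nonneg (by
      have : (τ:ℝ) ≤ t := by exact_mod_cast h
      linarith)]

lemma sum_dist_pow_le (q : ℝ) (h0 : 0 ≤ q) (h1 : q < 1) (u0 N τ : ℕ) :
    (∑ t ∈ Finset.range N, q ^ (Nat.dist t τ - u0)) ≤ 2*((u0:ℝ) + 1/(1-q)) := by
  classical
  have hsplit := Finset.sum_filter_add_sum_filter_not (Finset.range N)
    (fun t => t ≤ τ) (fun t => q ^ (Nat.dist t τ - u0))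
  have hA : (∑ t ∈ (Finset.range N).filter (fun t => t ≤ τ), q ^ (Nat.dist t τ - u0))
      ≤ (u0:ℝ) + 1/(1-q) := by
    have hsub : (Finset.range N).filter (fun t => t ≤ τ) ⊆ Finset.range (τ+1) := by
      intro v hv
      rcases Finset.mem_filter.mp hv with ⟨_, hvu⟩
      exact Finset.mem_range.mpr (by omega)
    have h2 : (∑ t ∈ (Finset.range N).filter (fun t => t ≤ τ), q ^ (Nat.dist t τ - u0))
        ≤ ∑ t ∈ Finset.range (τ+1), q ^ (Nat.dist t τ - u0) :=
      Finset.sum_le_sum_of_subset_of_nonneg hsub (fun i _ _ => pow_nonneg h0 _)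
    have h3 : (∑ t ∈ Finset.range (τ+1), q ^ (Nat.dist t τ - u0))
        = ∑ v ∈ Finset.range (τ+1), q ^ (v - u0) := by
      rw [← Finset.sum_range_reflect (fun v => q ^ (v - u0)) (τ+1)]
      refine Finset.sum_congr rfl (fun t ht => ?_)
      have ht' : t ≤ τ := by
        have := Finset.mem_range.mp ht; omega
      congr 1
      rw [Nat.dist_eq_sub_of_le ht']
      omega
    calc _ ≤ _ := h2
      _ = _ := h3
      _ ≤ (u0:ℝ) + 1/(1-q) := sum_pow_tsub_le q h0 h1 u0 (τ+1)
  have hB : (∑ t ∈ (Finset.range N).filter (fun t => ¬ t ≤ τ), q ^ (Nat.dist t τ - u0))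
      ≤ (u0:ℝ) + 1/(1-q) := by
    have hsub : (Finset.range N).filter (fun t => ¬ t ≤ τ) ⊆ Finset.Ico (τ+1) N := by
      intro v hv
      rcases Finset.mem_filter.mp hv with ⟨hvr, hvu⟩
      exact Finset.mem_Ico.mpr ⟨by omega, Finset.mem_range.mp hvr⟩
    have h2 : (∑ t ∈ (Finset.range N).filter (fun t => ¬ t ≤ τ), q ^ (Nat.dist t τ - u0))
        ≤ ∑ t ∈ Finset.Ico (τ+1) N, q ^ (Nat.dist t τ - u0) :=
      Finset.sum_le_sum_of_subset_of_nonneg hsub (fun i _ _ => pow_nonneg h0 _)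
    have h3 : (∑ t ∈ Finset.Ico (τ+1) N, q ^ (Nat.dist t τ - u0))
        ≤ ∑ k ∈ Finset.range (N - (τ+1)), q ^ (k - u0) := by
      rw [Finset.sum_Ico_eq_sum_range]
      refine Finset.sum_le_sum (fun k _ => ?_)
      have hd : Nat.dist (τ+1+k) τ = k + 1 := by
        rw [Nat.dist_comm, Nat.dist_eq_sub_of_le (by omega)]
        omega
      rw [hd]
      exact pow_le_pow_of_le_one h0 h1.le (by omega)
    calc _ ≤ _ := h2
      _ ≤ _ := h3
      _ ≤ (u0:ℝ) + 1/(1-q) := sum_pow_tsub_le q h0 h1 u0 _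
  linarith

lemma log_le_two_sqrt {y : ℝ} (hy : 1 ≤ y) : Real.log y ≤ 2 * Real.sqrt y := by
  have hy0 : (0:ℝ) < y := by linarith
  have h1 : Real.log (Real.sqrt y) ≤ Real.sqrt y - 1 :=
    Real.log_le_sub_one_of_pos (Real.sqrt_pos.mpr hy0)
  have h2 : Real.log (Real.sqrt y) = Real.log y / 2 := Real.log_sqrt hy0.le
  linarith [Real.sqrt_nonneg y]

set_option maxHeartbeats 2000000 in
lemma stepB (δ c s1 : ℝ) (hδ : 1 ≤ δ) (hhyp : IsDeltaHyperbolic X δ) (hc : 0 < c) (hs : 0 < s1)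
    (x : ℤ → X)
    (hlow : ∀ a b : ℤ, c * |(a:ℝ) - (b:ℝ)| ≤ dist (x a) (x b))
    (hup : ∀ a b : ℤ, dist (x a) (x b) ≤ s1 * |(a:ℝ) - (b:ℝ)|) :
    ∃ R0 : ℝ, 0 < R0 ∧ ∀ m n : ℤ, m ≤ n → ∀ w : X,
      dist (x m) w + dist w (x n) = dist (x m) (x n) →
      ∃ t : ℤ, m ≤ t ∧ t ≤ n ∧ dist (x t) w ≤ R0 := by
  classical
  have hδ0 : (0:ℝ) < δ := by linarith
  have hlog2 : (0:ℝ) < Real.log 2 := Real.log_pos one_lt_two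
  set q : ℝ := (2:ℝ) ^ (-(c/(2*δ))) with hqdef
  have hq0 : 0 < q := Real.rpow_pos_of_pos two_pos _
  have hq1 : q < 1 := by
    apply Real.rpow_lt_one_of_one_lt_of_neg one_lt_two
    have : 0 < c/(2*δ) := by positivity
    linarith
  have h1q : (0:ℝ) < 1 - q := by linarith
  set a0 : ℝ := 4 / c with ha0def
  have ha00 : 0 < a0 := by positivity
  set b0 : ℝ := 5 + 2/(1-q) with hb0def
  have hb00 : (0:ℝ) < b0 := by positivity
  set β : ℝ := 4*δ / Real.log 2 with hβdef
  have hβ0 : 0 < β := by positivity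
  set R0 : ℝ := s1 + 4*δ + 2*β*Real.sqrt b0 + β^2*a0 + 1 with hR0def
  have hR0pos : 0 < R0 := by positivity
  clear_value q a0 b0 β R0
  refine ⟨R0, hR0pos, ?_⟩
  intro m n hmn w hw
  rcases eq_or_lt_of_le hmn with rfl | hlt
  · refine ⟨m, le_refl _, le_refl _, ?_⟩
    have h1 : dist (x m) w + dist w (x m) = 0 := by simpa using hw
    have h2 := dist_nonneg (x := x m) (y := w)
    have h3 := dist_nonneg (x := w) (y := x m)
    have : dist (x m) w = 0 := by linarith
    linarith
  set N : ℕ := (n - m).toNat with hNdef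
  have hN1 : 1 ≤ N := by omega
  have hmN : m + (N:ℤ) = n := by omega
  set y : ℕ → X := fun t => x (m + t) with hydef
  obtain ⟨τ, hτmem, hτmin⟩ := Finset.exists_min_image (Finset.range (N+1))
    (fun t => dist (y t) w) ⟨0, by simp⟩
  have hτN : τ ≤ N := by
    have := Finset.mem_range.mp hτmem; omega
  set r : ℝ := dist (y τ) w with hrdef
  have hr0 : 0 ≤ r := dist_nonneg
  have hrfinal : dist (x (m + (τ:ℤ))) w = r := rfl
  have hrmin : ∀ t, t ≤ N → r ≤ dist (y t) w := fun t ht =>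
    hτmin t (Finset.mem_range.mpr (by omega))
  have hcastsub : ∀ t t' : ℕ, ((m + (t:ℤ) : ℤ):ℝ) - ((m + (t':ℤ) : ℤ):ℝ) = (t:ℝ) - t' := by
    intro t t'; push_cast; ring
  have hdl : ∀ t, t ≤ N → c * |(t:ℝ) - τ| - r ≤ dist (y t) w := by
    intro t ht
    have h1 := hlow (m + t) (m + τ)
    rw [hcastsub t τ] at h1
    have h2 := dist_triangle (x (m+(t:ℤ))) w (x (m+(τ:ℤ)))
    have h3 : dist (x (m+(τ:ℤ))) w = r := rfl
    have h4 : dist w (x (m+(τ:ℤ))) = r := (dist_comm w (x (m+(τ:ℤ)))).trans h3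
    have h5 : dist (y t) w = dist (x (m+(t:ℤ))) w := rfl
    rw [h5]
    have h6 := dist_triangle (x (m+(t:ℤ))) (x (m+(τ:ℤ))) w
    linarith
  have hstep : ∀ t : ℕ, dist (y t) (y (t+1)) ≤ s1 := by
    intro t
    have h1 := hup (m + (t:ℤ)) (m + ((t+1:ℕ):ℤ))
    have h2 : |((m + (t:ℤ) : ℤ):ℝ) - ((m + ((t+1:ℕ):ℤ) : ℤ):ℝ)| = 1 := by
      push_cast
      rw [show ((m:ℝ) + (t:ℝ)) - ((m:ℝ) + ((t:ℝ)+1)) = -1 by ring]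
      norm_num
    rw [h2] at h1
    rw [mul_one] at h1
    exact h1
  set E : ℕ → ℝ := fun t => max 0 (c*(|(t:ℝ) - τ| - 1) - 2*r) with hEdef
  set ν : ℕ → ℝ := fun t => (2:ℝ) ^ (-(E t)/(2*δ)) with hνdef
  have hE0 : ∀ t, 0 ≤ E t := fun t => le_max_left _ _
  have hν0 : ∀ t, 0 < ν t := fun t => Real.rpow_pos_of_pos two_pos _
  have hν1 : ∀ t, ν t ≤ 1 := by
    intro t
    apply Real.rpow_le_one_of_one_le_of_nonpos one_le_two
    have := hE0 t
    apply div_nonpos_of_nonpos_of_nonneg <;> linarith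
  set K : ℝ := ∑ t ∈ Finset.range N, ν t with hKdef
  have hK0 : 0 < K :=
    Finset.sum_pos (fun t _ => hν0 t) ⟨0, Finset.mem_range.mpr (by omega)⟩
  have hK1 : 1 ≤ K := by
    have hex : ∃ t, t < N ∧ ν t = 1 := by
      rcases lt_or_ge τ N with hτ | hτ
      · refine ⟨τ, hτ, ?_⟩
        have hE : E τ = 0 := by
          apply max_eq_left
          have : |(τ:ℝ) - τ| = 0 := by simp
          rw [this]
          linarith
        simp [hνdef, hE]
      · have hτeq : τ = N := by omega
        refine ⟨N - 1, by omega, ?_⟩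
        have hcast : |((N-1:ℕ):ℝ) - τ| = 1 := by
          rw [hτeq]
          have : ((N-1:ℕ):ℝ) = (N:ℝ) - 1 := by
            have : (1:ℕ) ≤ N := hN1
            push_cast [Nat.cast_sub this]
            ring
          rw [this, show (N:ℝ) - 1 - N = -1 by ring]
          norm_num
        have hE : E (N-1) = 0 := by
          apply max_eq_left
          rw [hcast]
          simp
          linarith
        simp [hνdef, hE]
    obtain ⟨t, htN, hνt⟩ := hex
    calc (1:ℝ) = ν t := hνt.symm
      _ ≤ K := Finset.single_le_sum (f := ν) (fun i _ => (hν0 i).le)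
          (Finset.mem_range.mpr htN)
  set B : ℝ := r - s1/2 - 2*δ*Real.logb 2 K with hBdef
  have hgp0 : gromovProduct w (y 0) (y N) = 0 := by
    have h1 : y 0 = x m := by simp [hydef]
    have h2 : y N = x n := by rw [hydef]; simp only []; rw [hmN]
    unfold gromovProduct
    rw [h1, h2]
    have h3 : dist w (x n) = dist (x n) w := dist_comm _ _
    rw [h3] at hw
    linarith
  have hper : ∀ t, t < N → B ≤ gromovProduct w (y t) (y (t + 1)) + 2 * δ * Real.logb 2 (ν t / K) := by
    intro t ht
    have hlogν : Real.logb 2 (ν t) = -(E t)/(2*δ) := by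
      rw [hνdef]
      exact Real.logb_rpow two_pos (by norm_num)
    have hlogμ : Real.logb 2 (ν t / K) = -(E t)/(2*δ) - Real.logb 2 K := by
      rw [Real.logb_div (hν0 t).ne' hK0.ne', hlogν]
    have hgp : r - s1/2 + E t ≤ gromovProduct w (y t) (y (t+1)) := by
      have hd1 : r ≤ dist (y t) w := hrmin t (by omega)
      have hd2 : r ≤ dist (y (t+1)) w := hrmin (t+1) (by omega)
      have hd1' := hdl t (by omega)
      have hd2' := hdl (t+1) (by omega)
      have hstep' := hstep t
      have habs : |(t:ℝ) - τ| - 1 ≤ |((t+1:ℕ):ℝ) - τ| := by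
        have h9 := abs_sub_abs_le_abs_sub ((t:ℝ) - τ) (((t+1:ℕ):ℝ) - τ)
        have h8 : |((t:ℝ) - τ) - (((t+1:ℕ):ℝ) - τ)| = 1 := by
          push_cast
          rw [show ((t:ℝ) - τ) - (((t:ℝ)+1) - τ) = -1 by ring]
          norm_num
        linarith
      unfold gromovProduct
      rcases le_or_gt (c*(|(t:ℝ) - τ| - 1) - 2*r) 0 with hE | hE
      · have hEeq : E t = 0 := max_eq_left hE
        rw [hEeq]
        linarith
      · have hEeq : E t = c*(|(t:ℝ) - τ| - 1) - 2*r := max_eq_right hE.le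
        rw [hEeq]
        have h5 : c*(|(t:ℝ) - τ| - 1) - r ≤ dist (y (t+1)) w := by
          have h7 : c * (|(t:ℝ) - τ| - 1) ≤ c * |((t+1:ℕ):ℝ) - τ| :=
            mul_le_mul_of_nonneg_left habs hc.le
          linarith
        linarith
    rw [hlogμ]
    have hfact : 2*δ*(-(E t)/(2*δ) - Real.logb 2 K) = -(E t) - 2*δ*Real.logb 2 K := by
      field_simp
    rw [hfact]
    rw [hBdef]
    linarith
  have hchain := chainC δ (by linarith) hhyp w N y (fun t => ν t / K) B
    (fun t ht => div_pos (hν0 t) hK0)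
    (by
      show (∑ t ∈ Finset.range N, ν t / K) ≤ 1
      rw [← Finset.sum_div]
      rw [← hKdef, div_self hK0.ne']
      )
    hper hN1
  rw [hgp0] at hchain
  -- hchain : B - 2δ ≤ 0 ⇒ r ≤ s1/2 + 2δ + 2δ logb 2 K
  have hrle : r ≤ s1/2 + 2*δ + 2*δ*Real.logb 2 K := by
    rw [hBdef] at hchain
    linarith
  -- bound K
  set u0 : ℕ := ⌈2*r/c⌉₊ + 1 with hu0def
  have hu0ge : 2*r/c ≤ (u0:ℝ) - 1 := by
    rw [hu0def]
    push_cast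
    have := Nat.le_ceil (2*r/c)
    linarith
  have hu0lt : (u0:ℝ) < 2*r/c + 2 := by
    rw [hu0def]
    push_cast
    have := Nat.ceil_lt_add_one (by positivity : (0:ℝ) ≤ 2*r/c)
    linarith
  have hKle : K ≤ a0 * r + b0 := by
    have hbound : ∀ t ∈ Finset.range N, ν t ≤ q ^ (Nat.dist t τ - u0) := by
      intro t _
      rcases le_or_gt (Nat.dist t τ) u0 with hle | hgt
      · have hz : Nat.dist t τ - u0 = 0 := by omega
        rw [hz, pow_zero]
        exact hν1 t
      · have hcastd : ((Nat.dist t τ : ℕ):ℝ) = |(t:ℝ) - τ| := natdist_cast t τ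
        have hEge : c * (((Nat.dist t τ : ℕ):ℝ) - (u0:ℝ)) ≤ E t := by
          rw [hEdef]
          apply le_max_of_le_right
          rw [hcastd] at *
          have h6 : c * ((u0:ℝ) - 1) ≥ 2*r := by
            have h7 : 2*r/c ≤ (u0:ℝ) - 1 := hu0ge
            rw [div_le_iff₀ hc] at h7
            linarith
          nlinarith [abs_nonneg ((t:ℝ) - τ)]
        have hmono : ν t ≤ (2:ℝ) ^ (-(c * (((Nat.dist t τ : ℕ):ℝ) - (u0:ℝ)))/(2*δ)) := by
          rw [hνdef]
          apply (Real.rpow_le_rpow_left_iff one_lt_two).mpr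
          apply div_le_div_of_nonneg_right ?_ (by linarith : (0:ℝ) ≤ 2*δ)
          linarith
        have heq : (2:ℝ) ^ (-(c * (((Nat.dist t τ : ℕ):ℝ) - (u0:ℝ)))/(2*δ))
            = q ^ (Nat.dist t τ - u0) := by
          rw [hqdef]
          rw [← Real.rpow_natCast ((2:ℝ) ^ (-(c/(2*δ)))) (Nat.dist t τ - u0)]
          rw [← Real.rpow_mul (by norm_num : (0:ℝ) ≤ 2)]
          congr 1
          rw [Nat.cast_sub hgt.le]
          field_simp
          try ring
        rw [heq] at hmono
        exact hmono
    have h8 : K ≤ ∑ t ∈ Finset.range N, q ^ (Nat.dist t τ - u0) :=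
      Finset.sum_le_sum hbound
    have h9 := sum_dist_pow_le q hq0.le hq1 u0 N τ
    have h10 : 2*((u0:ℝ) + 1/(1-q)) ≤ a0 * r + b0 := by
      have hf : a0 * r = 2*(2*r/c) := by rw [ha0def]; ring
      rw [hf, hb0def]
      have h2 : 2*(1/(1-q)) = 2/(1-q) := by ring
      linarith [hu0lt, h2]
    exact le_trans h8 (le_trans h9 h10)
  clear_value r K B E ν N y
  have hlogKle : Real.logb 2 K ≤ Real.logb 2 (a0*r + b0) := by
    unfold Real.logb
    exact div_le_div_of_nonneg_right (Real.log_le_log hK0 hKle) hlog2.le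
  have hy1 : (1:ℝ) ≤ a0*r + b0 := le_trans hK1 hKle
  have hsq : Real.log (a0*r+b0) ≤ 2*Real.sqrt (a0*r+b0) := log_le_two_sqrt hy1
  have h2dlog : 2*δ*Real.logb 2 K ≤ β * Real.sqrt (a0*r+b0) := by
    have h1 : 2*δ*Real.logb 2 K ≤ 2*δ*Real.logb 2 (a0*r+b0) :=
      mul_le_mul_of_nonneg_left hlogKle (by linarith)
    have h2 : 2*δ*Real.logb 2 (a0*r+b0) ≤ β * Real.sqrt (a0*r+b0) := by
      have hfac : 2*δ*Real.logb 2 (a0*r+b0) = (2*δ/Real.log 2) * Real.log (a0*r+b0) := by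
        rw [Real.logb]; ring
      have hfac2 : β * Real.sqrt (a0*r+b0) = (2*δ/Real.log 2) * (2*Real.sqrt (a0*r+b0)) := by
        rw [hβdef]; ring
      rw [hfac, hfac2]
      exact mul_le_mul_of_nonneg_left hsq (by positivity)
    exact le_trans h1 h2
  have har0 : 0 ≤ a0 * r := by positivity
  have hsplitsq : Real.sqrt (a0*r+b0) ≤ Real.sqrt (a0*r) + Real.sqrt b0 := by
    have hsum : a0*r+b0 ≤ (Real.sqrt (a0*r) + Real.sqrt b0)^2 := by
      have e1 := Real.sq_sqrt har0
      have e2 := Real.sq_sqrt hb00.le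
      have e3 := Real.sqrt_nonneg (a0*r)
      have e4 := Real.sqrt_nonneg b0
      nlinarith
    have h := Real.sqrt_le_sqrt hsum
    rwa [Real.sqrt_sq (by positivity)] at h
  have hamgm : β * Real.sqrt (a0*r) ≤ (β^2*a0 + r)/2 := by
    have h1 : Real.sqrt (a0*r) = Real.sqrt a0 * Real.sqrt r := Real.sqrt_mul ha00.le r
    nlinarith [sq_nonneg (β*Real.sqrt a0 - Real.sqrt r), Real.sq_sqrt ha00.le,
      Real.sq_sqrt hr0, Real.sqrt_nonneg a0, Real.sqrt_nonneg r]
  have hfinal : r ≤ R0 := by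
    rw [hR0def]
    have hmm : β * Real.sqrt (a0*r+b0) ≤ β*Real.sqrt (a0*r) + β*Real.sqrt b0 := by
      have := mul_le_mul_of_nonneg_left hsplitsq hβ0.le
      linarith [this]
    linarith [hrle, h2dlog, hamgm]
  refine ⟨m + τ, by omega, by omega, ?_⟩
  rw [hrfinal]
  exact hfinal

set_option maxHeartbeats 1000000 in
lemma stepA (c s1 R0 : ℝ) (hc : 0 < c) (hs : 0 < s1) (hR0 : 0 < R0)
    (x : ℤ → X)
    (hlow : ∀ a b : ℤ, c * |(a:ℝ) - (b:ℝ)| ≤ dist (x a) (x b))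
    (hup : ∀ a b : ℤ, dist (x a) (x b) ≤ s1 * |(a:ℝ) - (b:ℝ)|)
    (hB : ∀ m n : ℤ, m ≤ n → ∀ w : X,
      dist (x m) w + dist w (x n) = dist (x m) (x n) →
      ∃ t : ℤ, m ≤ t ∧ t ≤ n ∧ dist (x t) w ≤ R0) :
    ∀ m n k : ℤ, m ≤ k → k ≤ n → ∀ γ : ℝ → X, γ 0 = x m → γ (dist (x m) (x n)) = x n →
      (∀ s ∈ Set.Icc (0:ℝ) (dist (x m) (x n)), ∀ t ∈ Set.Icc (0:ℝ) (dist (x m) (x n)),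
        dist (γ s) (γ t) = |s - t|) →
      ∃ s : ℝ, s ∈ Set.Icc (0:ℝ) (dist (x m) (x n)) ∧
        dist (x k) (γ s) ≤ s1 * ((2*R0+1)/c) + R0 := by
  intro m n k hmk hkn γ hγ0 hγD hiso
  classical
  have hD0 : 0 ≤ dist (x m) (x n) := dist_nonneg
  have hmem0 : (0:ℝ) ∈ Set.Icc (0:ℝ) (dist (x m) (x n)) := Set.mem_Icc.mpr ⟨le_refl _, hD0⟩
  have hmemD : dist (x m) (x n) ∈ Set.Icc (0:ℝ) (dist (x m) (x n)) :=
    Set.mem_Icc.mpr ⟨hD0, le_refl _⟩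
  rcases eq_or_lt_of_le hmk with rfl | hmk'
  · refine ⟨0, hmem0, ?_⟩
    rw [hγ0, dist_self]
    positivity
  have hmn : m < n := lt_of_lt_of_le hmk' hkn
  have hDpos : 0 < dist (x m) (x n) := by
    have h1 := hlow m n
    have habs : (1:ℝ) ≤ |(m:ℝ) - n| := by
      rw [abs_of_nonpos (by
        have : (m:ℝ) ≤ n := by exact_mod_cast hmn.le
        linarith)]
      have : (m:ℝ) + 1 ≤ n := by exact_mod_cast hmn
      linarith
    nlinarith
  set D : ℝ := dist (x m) (x n) with hDdef
  set P : ℕ := ⌈D⌉₊ with hPdef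
  have hP1 : 1 ≤ P := by
    rw [hPdef]
    exact Nat.one_le_ceil_iff.mpr hDpos
  have hDP : D ≤ P := Nat.le_ceil D
  have hPpos : (0:ℝ) < P := by
    have : (1:ℝ) ≤ (P:ℝ) := by exact_mod_cast hP1
    linarith
  set pt : ℕ → ℝ := fun i => (i:ℝ) * (D / P) with hptdef
  have hptmem : ∀ i, i ≤ P → pt i ∈ Set.Icc (0:ℝ) D := by
    intro i hi
    refine Set.mem_Icc.mpr ⟨by positivity, ?_⟩
    have h1 : (i:ℝ) ≤ P := by exact_mod_cast hi
    calc (i:ℝ)*(D/P) ≤ (P:ℝ)*(D/P) :=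
          mul_le_mul_of_nonneg_right h1 (by positivity)
      _ = D := by field_simp
  have hpt0 : pt 0 = 0 := by rw [hptdef]; simp
  have hptP : pt P = D := by rw [hptdef]; field_simp
  have hptstep : ∀ i : ℕ, |pt i - pt (i+1)| ≤ 1 := by
    intro i
    have h1 : pt i - pt (i+1) = -(D / P) := by rw [hptdef]; push_cast; ring
    rw [h1, abs_neg, abs_of_nonneg (by positivity)]
    rw [div_le_one hPpos]
    exact hDP
  have hadd : ∀ i, i ≤ P → dist (x m) (γ (pt i)) + dist (γ (pt i)) (x n) = D := by
    intro i hi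
    have hm := hptmem i hi
    have h1 : dist (γ 0) (γ (pt i)) = |0 - pt i| := hiso 0 hmem0 (pt i) hm
    have h2 : dist (γ (pt i)) (γ D) = |pt i - D| := hiso (pt i) hm D hmemD
    rw [hγ0] at h1
    rw [hγD] at h2
    rw [abs_of_nonpos (by linarith [hm.1])] at h1
    rw [abs_of_nonpos (by linarith [hm.2])] at h2
    rw [h1, h2]
    ring
  have hchoice : ∀ i, i ≤ P → ∃ t : ℤ, m ≤ t ∧ t ≤ n ∧ dist (x t) (γ (pt i)) ≤ R0 :=
    fun i hi => hB m n (le_trans hmk hkn) (γ (pt i)) (hadd i hi)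
  set tf : ℕ → ℤ := fun i => if i = P then n else if i = 0 then m else
      (if hi : i ≤ P then (hchoice i hi).choose else n) with htfdef
  have htfP : tf P = n := by rw [htfdef]; simp
  have htf0 : tf 0 = m := by
    rw [htfdef]
    have h0P : (0:ℕ) ≠ P := by omega
    simp [h0P]
  have htf_bounds : ∀ i, i ≤ P → m ≤ tf i ∧ tf i ≤ n ∧ dist (x (tf i)) (γ (pt i)) ≤ R0 := by
    intro i hi
    by_cases hiP : i = P
    · subst hiP
      rw [htfP, hptP, hγD, dist_self]
      exact ⟨le_trans hmk hkn, le_refl _, hR0.le⟩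
    · by_cases hi0 : i = 0
      · subst hi0
        rw [htf0, hpt0, hγ0, dist_self]
        exact ⟨le_refl _, le_trans hmk hkn, hR0.le⟩
      · have htfi : tf i = (hchoice i hi).choose := by
          rw [htfdef]
          simp [hiP, hi0, hi]
        rw [htfi]
        exact (hchoice i hi).choose_spec
  have hQP : k ≤ tf P := by rw [htfP]; exact hkn
  have hex : ∃ i, k ≤ tf i := ⟨P, hQP⟩
  set i0 := Nat.find hex with hi0def
  have hfind : k ≤ tf i0 := Nat.find_spec hex
  have hi0P : i0 ≤ P := Nat.find_le hQP
  have hi0pos : i0 ≠ 0 := by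
    intro h0
    rw [h0, htf0] at hfind
    omega
  obtain ⟨i1, hi1⟩ : ∃ i1, i0 = i1 + 1 := ⟨i0 - 1, by omega⟩
  have hprev : ¬ k ≤ tf i1 := by
    apply Nat.find_min hex
    omega
  have hi1P : i1 + 1 ≤ P := by omega
  have hb1 := htf_bounds i1 (by omega)
  have hb2 := htf_bounds (i1+1) hi1P
  have hptd : dist (γ (pt i1)) (γ (pt (i1+1))) ≤ 1 := by
    have := hiso (pt i1) (hptmem i1 (by omega)) (pt (i1+1)) (hptmem (i1+1) hi1P)
    rw [this]
    exact hptstep i1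
  have hdist : dist (x (tf i1)) (x (tf (i1+1))) ≤ 2*R0 + 1 := by
    have h4 := dist_triangle4 (x (tf i1)) (γ (pt i1)) (γ (pt (i1+1))) (x (tf (i1+1)))
    have h5 : dist (γ (pt (i1+1))) (x (tf (i1+1))) = dist (x (tf (i1+1))) (γ (pt (i1+1))) :=
      dist_comm _ _
    rw [h5] at h4
    linarith [hb1.2.2, hb2.2.2, hptd]
  have hgap : ((tf (i1+1)):ℝ) - k ≤ (2*R0+1)/c := by
    have h1 := hlow (tf i1) (tf (i1+1))
    have h2 : c * |(tf i1 : ℝ) - tf (i1+1)| ≤ 2*R0+1 := le_trans h1 hdist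
    have habs : ((tf (i1+1)):ℝ) - tf i1 ≤ |(tf i1 : ℝ) - tf (i1+1)| := by
      rw [abs_sub_comm]
      exact le_abs_self _
    have h3 : (tf i1 : ℝ) ≤ (k:ℝ) - 1 := by exact_mod_cast (by omega : tf i1 ≤ k - 1)
    rw [le_div_iff₀ hc]
    nlinarith
  refine ⟨pt (i1+1), hptmem _ hi1P, ?_⟩
  have h1 := dist_triangle (x k) (x (tf (i1+1))) (γ (pt (i1+1)))
  have h2 := hup k (tf (i1+1))
  rw [hi1] at hfind
  have habs2 : |(k:ℝ) - tf (i1+1)| = (tf (i1+1):ℝ) - k := by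
    rw [abs_of_nonpos (by
      have : (k:ℝ) ≤ tf (i1+1) := by exact_mod_cast hfind
      linarith)]
    ring
  rw [habs2] at h2
  have h3 : s1 * ((tf (i1+1):ℝ) - k) ≤ s1 * ((2*R0+1)/c) :=
    mul_le_mul_of_nonneg_left hgap hs.le
  linarith [hb2.2.2]

end Helpers

set_option maxHeartbeats 4000000 in
/-- if c(f) > 0 and (z_n) is a backward orbit with bounded step,
then the induced complete orbit is a discrete quasi-geodesic line lying within
bounded distance of a geodesic line. -/
theorem backward_orbit_quasigeodesic_line {X : Type*} [MetricSpace X] [ProperSpace X]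
    (hX : IsGeodesicSpace X)
    (δ : ℝ) (hδ : 0 ≤ δ) (hhyp : IsDeltaHyperbolic X δ)
    (f : X → X) (hf : ∀ a b : X, dist (f a) (f b) ≤ dist a b)
    (c : ℝ) (hc : 0 < c)
    (z : ℕ → X) (hback : ∀ n : ℕ, f (z (n + 1)) = z n)
    (s1 : ℝ) (hs1 : ∀ n : ℕ, dist (z n) (z (n + 1)) ≤ s1)
    (hrate : Tendsto (fun n : ℕ => dist (z 0) (f^[n] (z 0)) / n) atTop (nhds c))
    (x : ℤ → X)
    (hxneg : ∀ n : ℕ, x (-(n : ℤ)) = z n)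
    (hxpos : ∀ n : ℕ, x (n : ℤ) = f^[n] (z 0)) :
    (∀ n m : ℤ, c * |(n : ℝ) - (m : ℝ)| ≤ dist (x n) (x m) ∧
      dist (x n) (x m) ≤ s1 * |(n : ℝ) - (m : ℝ)|) ∧
    (∃ σ : ℝ → X, (∀ s t : ℝ, dist (σ s) (σ t) = |s - t|) ∧
      ∃ R > (0 : ℝ), ∀ n : ℤ, ∃ t : ℝ, dist (x n) (σ t) ≤ R) := by
  classical
  have hx0 : x 0 = z 0 := by simpa using hxpos 0
  have hfx : ∀ t : ℤ, f (x t) = x (t + 1) := by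
    intro t
    rcases le_or_gt 0 t with ht | ht
    · obtain ⟨a, rfl⟩ := Int.eq_ofNat_of_zero_le ht
      rw [hxpos a]
      have h1 : ((a:ℤ) + 1) = ((a+1 : ℕ) : ℤ) := by push_cast; ring
      rw [h1, hxpos (a+1), Function.iterate_succ_apply']
    · obtain ⟨a, ha⟩ : ∃ a : ℕ, t = -((a+1 : ℕ) : ℤ) := ⟨(-t - 1).toNat, by omega⟩
      subst ha
      rw [hxneg (a+1)]
      have h1 : (-((a+1:ℕ):ℤ) + 1) = -((a:ℕ):ℤ) := by push_cast; ring
      rw [h1, hxneg a]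
      exact hback a
  have hmono : ∀ (j : ℕ) (a b : ℤ), dist (x (a + j)) (x (b + j)) ≤ dist (x a) (x b) := by
    intro j
    induction j with
    | zero => intro a b; simp
    | succ p IH =>
      intro a b
      have h1 : (a + ((p+1:ℕ):ℤ)) = (a + (p:ℕ)) + 1 := by push_cast; ring
      have h2 : (b + ((p+1:ℕ):ℤ)) = (b + (p:ℕ)) + 1 := by push_cast; ring
      rw [h1, h2, ← hfx (a + (p:ℕ)), ← hfx (b + (p:ℕ))]
      exact le_trans (hf _ _) (IH a b)
  have hstep1 : ∀ t : ℤ, dist (x t) (x (t+1)) ≤ s1 := by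
    intro t
    rcases le_or_gt 0 (t+1) with ht | ht
    · have hbase : dist (x (-1)) (x 0) ≤ s1 := by
        have h1 : x (-1 : ℤ) = z 1 := by
          have := hxneg 1; simpa using this
        rw [h1, hx0, dist_comm]
        exact hs1 0
      obtain ⟨jn, hj⟩ : ∃ jn : ℕ, t = -1 + (jn:ℤ) := ⟨(t+1).toNat, by omega⟩
      subst hj
      have h2 := hmono jn (-1) 0
      have h3 : ((0:ℤ) + (jn:ℕ)) = (-1 + (jn:ℕ)) + 1 := by ring
      rw [h3] at h2
      exact le_trans h2 hbase
    · obtain ⟨a, ha⟩ : ∃ a : ℕ, t = -((a+1 : ℕ):ℤ) := ⟨(-t-1).toNat, by omega⟩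
      subst ha
      have h1 : (-((a+1:ℕ):ℤ) + 1) = -((a:ℕ):ℤ) := by push_cast; ring
      rw [hxneg (a+1), h1, hxneg a, dist_comm]
      exact hs1 a
  have hs10 : 0 ≤ s1 := le_trans dist_nonneg (hs1 0)
  have hupaux : ∀ (j : ℕ) (a : ℤ), dist (x a) (x (a + (j:ℤ))) ≤ s1 * j := by
    intro j
    induction j with
    | zero => intro a; simp
    | succ p IH =>
      intro a
      have h2 : (a + ((p+1:ℕ):ℤ)) = (a + (p:ℕ)) + 1 := by push_cast; ring
      have h3 := hstep1 (a + (p:ℕ))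
      have h1 := dist_triangle (x a) (x (a + (p:ℕ))) (x ((a + (p:ℕ)) + 1))
      rw [h2]
      have h4 := IH a
      push_cast
      push_cast at h4
      have : s1 * ((p:ℝ) + 1) = s1 * p + s1 := by ring
      rw [this]
      linarith
  have hup : ∀ a b : ℤ, dist (x a) (x b) ≤ s1 * |(a:ℝ) - (b:ℝ)| := by
    have hup' : ∀ a b : ℤ, a ≤ b → dist (x a) (x b) ≤ s1 * |(a:ℝ) - (b:ℝ)| := by
      intro a b hab
      obtain ⟨j, hj⟩ : ∃ j : ℕ, b = a + (j:ℤ) := ⟨(b-a).toNat, by omega⟩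
      subst hj
      have h1 := hupaux j a
      have habs : |((a:ℤ):ℝ) - ((a + (j:ℤ) : ℤ):ℝ)| = (j:ℝ) := by
        push_cast
        rw [show ((a:ℝ) - ((a:ℝ) + (j:ℝ))) = -(j:ℝ) by ring, abs_neg,
          abs_of_nonneg (by positivity)]
      rw [habs]
      exact h1
    intro a b
    rcases le_total a b with hab | hab
    · exact hup' a b hab
    · rw [dist_comm, abs_sub_comm]
      exact hup' b a hab
  have haseq : ∀ nn : ℕ, dist (x 0) (x (nn:ℤ)) = dist (z 0) (f^[nn] (z 0)) := by
    intro nn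
    rw [hxpos nn, hx0]
  have hkey : ∀ (a : ℤ) (p : ℕ), 1 ≤ p → c * p ≤ dist (x a) (x (a + (p:ℤ))) := by
    intro a p hp
    have hchain : ∀ jn : ℕ, dist (x a) (x (a + ((p*jn : ℕ):ℤ))) ≤ jn * dist (x a) (x (a + (p:ℤ))) := by
      intro jn
      induction jn with
      | zero => simp
      | succ jj IH =>
        have h1 : (a + ((p*(jj+1) : ℕ):ℤ)) = (a + ((p:ℕ):ℤ)) + ((p*jj:ℕ):ℤ) := by push_cast; ring
        have h4 := hmono (p*jj) a (a + (p:ℕ))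
        have h2 := dist_triangle (x a) (x (a + ((p*jj:ℕ):ℤ))) (x (a + ((p*(jj+1):ℕ):ℤ)))
        rw [h1]
        rw [h1] at h2
        push_cast
        push_cast at IH
        have h5 : ((jj:ℝ)+1) * dist (x a) (x (a + (p:ℤ))) = (jj:ℝ) * dist (x a) (x (a + (p:ℤ))) + dist (x a) (x (a + (p:ℤ))) := by ring
        rw [h5]
        have h6 : dist (x (a + ((p*jj:ℕ):ℤ))) (x ((a + ((p:ℕ):ℤ)) + ((p*jj:ℕ):ℤ))) ≤ dist (x a) (x (a + ((p:ℕ):ℤ))) := h4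
        push_cast at h6 h2 ⊢
        linarith
    have hbridge : ∀ jn : ℕ, dist (x 0) (x ((p*jn : ℕ):ℤ)) ≤ jn * dist (x a) (x (a + (p:ℤ))) + 2*s1*|(a:ℝ)| := by
      intro jn
      have h1 := dist_triangle4 (x 0) (x a) (x (a + ((p*jn:ℕ):ℤ))) (x ((p*jn:ℕ):ℤ))
      have h2 := hup 0 a
      have h3 := hup (a + ((p*jn:ℕ):ℤ)) ((p*jn:ℕ):ℤ)
      have habs2 : |((0:ℤ):ℝ) - ((a:ℤ):ℝ)| = |(a:ℝ)| := by
        push_cast; rw [zero_sub, abs_neg]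
      have habs3 : |((a + ((p*jn:ℕ):ℤ) : ℤ):ℝ) - (((p*jn:ℕ):ℤ):ℝ)| = |(a:ℝ)| := by
        have he : ((a + ((p*jn:ℕ):ℤ) : ℤ):ℝ) - (((p*jn:ℕ):ℤ):ℝ) = (a:ℝ) := by push_cast; ring
        rw [he]
      rw [habs2] at h2
      rw [habs3] at h3
      have h5 := hchain jn
      linarith
    have hpj : Tendsto (fun jn : ℕ => p * jn) atTop atTop := by
      apply tendsto_atTop_mono (fun jn => Nat.le_mul_of_pos_left jn (by omega : 0 < p))
      exact tendsto_id
    have hseq : Tendsto (fun jn : ℕ => dist (z 0) (f^[p*jn] (z 0)) / ((p*jn : ℕ):ℝ)) atTop (nhds c) :=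
      hrate.comp hpj
    have hinv : Tendsto (fun jn : ℕ => 1/((p*jn:ℕ):ℝ)) atTop (nhds 0) := by
      simp only [one_div]
      apply Tendsto.comp tendsto_inv_atTop_zero
      exact tendsto_natCast_atTop_atTop.comp hpj
    have hlim2 : Tendsto (fun jn : ℕ => dist (x a) (x (a + (p:ℤ)))/(p:ℝ) + (2*s1*|(a:ℝ)|) * (1/((p*jn:ℕ):ℝ))) atTop
        (nhds (dist (x a) (x (a + (p:ℤ)))/(p:ℝ) + (2*s1*|(a:ℝ)|) * 0)) :=
      tendsto_const_nhds.add (hinv.const_mul _)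
    have hle : ∀ᶠ jn : ℕ in atTop, dist (z 0) (f^[p*jn] (z 0)) / ((p*jn : ℕ):ℝ)
        ≤ dist (x a) (x (a + (p:ℤ)))/(p:ℝ) + (2*s1*|(a:ℝ)|) * (1/((p*jn:ℕ):ℝ)) := by
      filter_upwards [eventually_ge_atTop 1] with jn hjn
      have hpj1 : (1:ℕ) ≤ p*jn := by
        calc 1 = 1*1 := by norm_num
        _ ≤ p*jn := Nat.mul_le_mul hp hjn
      have hpjpos : (0:ℝ) < ((p*jn:ℕ):ℝ) := by exact_mod_cast hpj1
      rw [← haseq (p*jn)]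
      rw [div_le_iff₀ hpjpos]
      have heval : (dist (x a) (x (a + (p:ℤ)))/(p:ℝ) + (2*s1*|(a:ℝ)|) * (1/((p*jn:ℕ):ℝ))) * ((p*jn:ℕ):ℝ)
          = dist (x a) (x (a + (p:ℤ))) * jn + 2*s1*|(a:ℝ)| := by
        have hppos : (0:ℝ) < (p:ℝ) := by exact_mod_cast hp
        push_cast
        field_simp
      rw [heval]
      have := hbridge jn
      linarith
    have hfin := le_of_tendsto_of_tendsto hseq hlim2 hle
    rw [mul_zero, add_zero] at hfin
    have hppos : (0:ℝ) < (p:ℝ) := by exact_mod_cast hp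
    rw [le_div_iff₀ hppos] at hfin
    linarith
  have hlow : ∀ a b : ℤ, c * |(a:ℝ) - (b:ℝ)| ≤ dist (x a) (x b) := by
    have hlow' : ∀ a b : ℤ, a < b → c * |(a:ℝ) - (b:ℝ)| ≤ dist (x a) (x b) := by
      intro a b hab
      obtain ⟨p, hp1, hpeq⟩ : ∃ p : ℕ, 1 ≤ p ∧ b = a + (p:ℤ) := ⟨(b-a).toNat, by omega, by omega⟩
      subst hpeq
      have h1 := hkey a p hp1
      have habs : |((a:ℤ):ℝ) - ((a + (p:ℤ) : ℤ):ℝ)| = (p:ℝ) := by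
        push_cast
        rw [show ((a:ℝ) - ((a:ℝ) + (p:ℝ))) = -(p:ℝ) by ring, abs_neg,
          abs_of_nonneg (by positivity)]
      rw [habs]
      exact h1
    intro a b
    rcases lt_trichotomy a b with h | h | h
    · exact hlow' a b h
    · subst h
      simp
    · rw [dist_comm, abs_sub_comm]
      exact hlow' b a h
  refine ⟨fun nn mm => ⟨hlow nn mm, hup nn mm⟩, ?_⟩
  -- Part 2
  have hcs1 : c ≤ s1 := by
    have h1 := hlow 0 1
    have h2 := hup 0 1
    have habs : |((0:ℤ):ℝ) - ((1:ℤ):ℝ)| = 1 := by norm_num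
    rw [habs] at h1 h2
    linarith
  have hs1pos : 0 < s1 := lt_of_lt_of_le hc hcs1
  have hhyp' : IsDeltaHyperbolic X (δ+1) := by
    intro p aa bb zz
    have := hhyp p aa bb zz
    linarith
  obtain ⟨R0, hR0pos, hB⟩ := stepB (δ+1) c s1 (by linarith) hhyp' hc hs1pos x hlow hup
  have hA := stepA c s1 R0 hc hs1pos hR0pos x hlow hup hB
  set R1 : ℝ := s1 * ((2*R0+1)/c) + R0 with hR1def
  have hR1pos : 0 < R1 := by positivity
  have hgeo : ∀ K : ℕ, ∃ γ : ℝ → X, γ 0 = x (-(K:ℤ)) ∧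
      γ (dist (x (-(K:ℤ))) (x (K:ℤ))) = x (K:ℤ) ∧
      ∀ s ∈ Set.Icc (0:ℝ) (dist (x (-(K:ℤ))) (x (K:ℤ))),
        ∀ t ∈ Set.Icc (0:ℝ) (dist (x (-(K:ℤ))) (x (K:ℤ))),
          dist (γ s) (γ t) = |s - t| := fun K => hX _ _
  choose γg hg0 hgD hgiso using hgeo
  set D : ℕ → ℝ := fun K => dist (x (-(K:ℤ))) (x (K:ℤ)) with hDdef
  have hD0 : ∀ K, 0 ≤ D K := fun K => dist_nonneg
  have hc0 : ∀ K : ℕ, ∃ s, s ∈ Set.Icc (0:ℝ) (D K) ∧ dist (x 0) (γg K s) ≤ R1 := by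
    intro K
    exact hA (-(K:ℤ)) (K:ℤ) 0 (by omega) (by omega) (γg K) (hg0 K) (hgD K) (hgiso K)
  choose cK hcKmem hcKdist using hc0
  set σK : ℕ → ℝ → X := fun K s => γg K (min (max (s + cK K) 0) (D K)) with hσKdef
  have hclampmem : ∀ K (s : ℝ), min (max (s + cK K) 0) (D K) ∈ Set.Icc (0:ℝ) (D K) := by
    intro K s
    exact Set.mem_Icc.mpr ⟨le_min (le_max_right _ _) (hD0 K), min_le_right _ _⟩
  have hclamplip : ∀ K (s t : ℝ),
      |min (max (s + cK K) 0) (D K) - min (max (t + cK K) 0) (D K)| ≤ |s - t| := by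
    intro K s t
    have h1 := abs_min_sub_min_le_abs' (max (s + cK K) 0) (max (t + cK K) 0) (D K)
    have h2 := abs_max_sub_max_le_abs (s + cK K) (t + cK K) 0
    have h3 : (s + cK K) - (t + cK K) = s - t := by ring
    rw [h3] at h2
    exact le_trans h1 h2
  have hσKlip : ∀ K (s t : ℝ), dist (σK K s) (σK K t) ≤ |s - t| := by
    intro K s t
    have hiso := hgiso K _ (hclampmem K s) _ (hclampmem K t)
    calc dist (σK K s) (σK K t)
        = |min (max (s + cK K) 0) (D K) - min (max (t + cK K) 0) (D K)| := hiso
      _ ≤ |s - t| := hclamplip K s t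
  have hσK0 : ∀ K, dist (x 0) (σK K 0) ≤ R1 := by
    intro K
    have hmem := hcKmem K
    have hcl : min (max ((0:ℝ) + cK K) 0) (D K) = cK K := by
      rw [zero_add, max_eq_left hmem.1, min_eq_left hmem.2]
    show dist (x 0) (γg K (min (max ((0:ℝ) + cK K) 0) (D K))) ≤ R1
    rw [hcl]
    exact hcKdist K
  have hσKb : ∀ K (s : ℝ), dist (σK K s) (x 0) ≤ |s| + R1 := by
    intro K s
    have h1 := hσKlip K s 0
    rw [sub_zero] at h1
    have h2 := hσK0 K
    have h3 := dist_triangle (σK K s) (σK K 0) (x 0)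
    rw [dist_comm (σK K 0) (x 0)] at h3
    linarith
  have hσKiso : ∀ K : ℕ, ∀ s t : ℝ, -(cK K) ≤ s → s ≤ D K - cK K → -(cK K) ≤ t →
      t ≤ D K - cK K → dist (σK K s) (σK K t) = |s - t| := by
    intro K s t h1 h2 h3 h4
    have hcs : min (max (s + cK K) 0) (D K) = s + cK K := by
      rw [max_eq_left (by linarith), min_eq_left (by linarith)]
    have hct : min (max (t + cK K) 0) (D K) = t + cK K := by
      rw [max_eq_left (by linarith), min_eq_left (by linarith)]
    have hiso := hgiso K _ (hclampmem K s) _ (hclampmem K t)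
    calc dist (σK K s) (σK K t)
        = |min (max (s + cK K) 0) (D K) - min (max (t + cK K) 0) (D K)| := hiso
      _ = |s - t| := by rw [hcs, hct]; congr 1; ring
  have hgrow : ∀ K : ℕ, c * K - R1 ≤ cK K ∧ c * K - R1 ≤ D K - cK K := by
    intro K
    have hmem := hcKmem K
    have hmem0 : (0:ℝ) ∈ Set.Icc (0:ℝ) (D K) := Set.mem_Icc.mpr ⟨le_refl _, hD0 K⟩
    have hmemD : D K ∈ Set.Icc (0:ℝ) (D K) := Set.mem_Icc.mpr ⟨hD0 K, le_refl _⟩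
    have hd1 : dist (x (-(K:ℤ))) (γg K (cK K)) = cK K := by
      have h := hgiso K 0 hmem0 (cK K) hmem
      rw [hg0 K] at h
      rw [h, abs_of_nonpos (by linarith [hmem.1]), neg_sub, sub_zero]
    have hd2 : dist (γg K (cK K)) (x (K:ℤ)) = D K - cK K := by
      have h := hgiso K (cK K) hmem (D K) hmemD
      rw [hgD K] at h
      rw [h, abs_of_nonpos (by linarith [hmem.2]), neg_sub]
    have hr := hcKdist K
    constructor
    · have h1 := hlow (-(K:ℤ)) 0
      have habs : |((-(K:ℤ):ℤ):ℝ) - ((0:ℤ):ℝ)| = (K:ℝ) := by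
        push_cast
        rw [sub_zero, abs_neg, abs_of_nonneg (by positivity)]
      rw [habs] at h1
      have h4 := dist_triangle (x (-(K:ℤ))) (γg K (cK K)) (x 0)
      rw [hd1, dist_comm (γg K (cK K)) (x 0)] at h4
      linarith
    · have h1 := hlow 0 (K:ℤ)
      have habs : |((0:ℤ):ℝ) - (((K:ℤ)):ℝ)| = (K:ℝ) := by
        push_cast
        rw [zero_sub, abs_neg, abs_of_nonneg (by positivity)]
      rw [habs] at h1
      have h4 := dist_triangle (x 0) (γg K (cK K)) (x (K:ℤ))
      rw [hd2] at h4
      linarith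
  obtain ⟨U, hU⟩ := Filter.exists_ultrafilter_le (atTop : Filter ℕ)
  have hσex : ∀ s : ℝ, ∃ a : X, Tendsto (fun K => σK K s) U (nhds a) := by
    intro s
    have hcompact := isCompact_closedBall (x 0) (|s| + R1)
    have hmem : ∀ K, σK K s ∈ Metric.closedBall (x 0) (|s| + R1) := by
      intro K
      rw [Metric.mem_closedBall]
      exact hσKb K s
    obtain ⟨a, _, ha⟩ := hcompact.ultrafilter_le_nhds (U.map (fun K => σK K s)) (by
      rw [Ultrafilter.coe_map]
      exact Filter.le_principal_iff.mpr (Filter.mem_map.mpr (Filter.univ_mem' hmem)))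
    refine ⟨a, ?_⟩
    rwa [Ultrafilter.coe_map] at ha
  choose σ hσ using hσex
  refine ⟨σ, ?_, R1, hR1pos, ?_⟩
  · intro s t
    have hev : ∀ᶠ K in (atTop : Filter ℕ), dist (σK K s) (σK K t) = |s - t| := by
      filter_upwards [eventually_ge_atTop (⌈(max |s| |t| + R1)/c⌉₊ + 1)] with K hK
      have h1 : ((⌈(max |s| |t| + R1)/c⌉₊ : ℕ):ℝ) ≤ (K:ℝ) := by
        exact_mod_cast (by omega : ⌈(max |s| |t| + R1)/c⌉₊ ≤ K)
      have h2 := Nat.le_ceil ((max |s| |t| + R1)/c)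
      have h3 : (max |s| |t| + R1)/c ≤ (K:ℝ) := le_trans h2 h1
      rw [div_le_iff₀ hc] at h3
      have hKc : max |s| |t| + R1 ≤ c * K := by linarith [h3]
      have hg := hgrow K
      have hsmax : |s| ≤ max |s| |t| := le_max_left _ _
      have htmax : |t| ≤ max |s| |t| := le_max_right _ _
      apply hσKiso K s t
      · linarith [neg_abs_le s, hg.1]
      · linarith [le_abs_self s, hg.2]
      · linarith [neg_abs_le t, hg.1]
      · linarith [le_abs_self t, hg.2]
    have h1 : Tendsto (fun K => dist (σK K s) (σK K t)) U (nhds (dist (σ s) (σ t))) :=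
      (hσ s).dist (hσ t)
    have h2 : Tendsto (fun K => dist (σK K s) (σK K t)) U (nhds (|s - t|)) := by
      apply Tendsto.congr' ?_ tendsto_const_nhds
      exact ((hev.filter_mono hU).mono (fun K hK => hK.symm))
    exact tendsto_nhds_unique h1 h2
  · intro nn
    have hKgood : ∀ K : ℕ, nn.natAbs ≤ K →
        ∃ s, s ∈ Set.Icc (0:ℝ) (D K) ∧ dist (x nn) (γg K s) ≤ R1 := by
      intro K hK
      exact hA (-(K:ℤ)) (K:ℤ) nn (by omega) (by omega) (γg K) (hg0 K) (hgD K) (hgiso K)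
    set τf : ℕ → ℝ := fun K => if h : nn.natAbs ≤ K then (hKgood K h).choose - cK K else 0
      with hτfdef
    set M : ℝ := s1 * |(nn:ℝ)| + 2*R1 with hMdef
    have hM0 : 0 ≤ M := by positivity
    have hτb : ∀ K, |τf K| ≤ M := by
      intro K
      by_cases h : nn.natAbs ≤ K
      · have hτfK : τf K = (hKgood K h).choose - cK K := by rw [hτfdef]; simp [h]
        obtain ⟨hmem, hdist⟩ := (hKgood K h).choose_spec
        have h1 : dist (γg K ((hKgood K h).choose)) (γg K (cK K)) = |(hKgood K h).choose - cK K| :=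
          hgiso K _ hmem _ (hcKmem K)
        have h2 := dist_triangle4 (γg K ((hKgood K h).choose)) (x nn) (x 0) (γg K (cK K))
        rw [dist_comm (γg K ((hKgood K h).choose)) (x nn)] at h2
        have h3 := hup nn 0
        have habs : |((nn:ℤ):ℝ) - ((0:ℤ):ℝ)| = |(nn:ℝ)| := by push_cast; rw [sub_zero]
        rw [habs] at h3
        have h4 := hcKdist K
        rw [hτfK, hMdef, ← h1]
        linarith
      · have hτfK : τf K = 0 := by rw [hτfdef]; simp [h]
        rw [hτfK]
        simpa using hM0
    obtain ⟨τstar, _, hτs⟩ := (isCompact_closedBall (0:ℝ) M).ultrafilter_le_nhds (U.map τf) (by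
      rw [Ultrafilter.coe_map]
      refine Filter.le_principal_iff.mpr (Filter.mem_map.mpr (Filter.univ_mem' (fun K => ?_)))
      show τf K ∈ Metric.closedBall (0:ℝ) M
      rw [Metric.mem_closedBall, Real.dist_eq, sub_zero]
      exact hτb K)
    have hτtend : Tendsto τf U (nhds τstar) := by rwa [Ultrafilter.coe_map] at hτs
    refine ⟨τstar, ?_⟩
    have hev : ∀ᶠ K in (atTop : Filter ℕ), dist (x nn) (σK K τstar) ≤ R1 + |τf K - τstar| := by
      filter_upwards [eventually_ge_atTop nn.natAbs] with K hK
      obtain ⟨hmem, hdist⟩ := (hKgood K hK).choose_spec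
      have hτfK : τf K = (hKgood K hK).choose - cK K := by rw [hτfdef]; simp [hK]
      have hσKτ : σK K (τf K) = γg K ((hKgood K hK).choose) := by
        show γg K (min (max (τf K + cK K) 0) (D K)) = _
        rw [hτfK, sub_add_cancel, max_eq_left hmem.1, min_eq_left hmem.2]
      have h1 := dist_triangle (x nn) (σK K (τf K)) (σK K τstar)
      have h2 := hσKlip K (τf K) τstar
      rw [hσKτ] at h1 h2
      linarith
    have h1 : Tendsto (fun K => dist (x nn) (σK K τstar)) U (nhds (dist (x nn) (σ τstar))) :=
      tendsto_const_nhds.dist (hσ τstar)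
    have h2 : Tendsto (fun K => R1 + |τf K - τstar|) U (nhds (R1 + |τstar - τstar|)) :=
      tendsto_const_nhds.add ((hτtend.sub tendsto_const_nhds).abs)
    have h3 := le_of_tendsto_of_tendsto h1 h2 (hev.filter_mono hU)
    simpa using h3
end

section
/- Let (X,d) be a metric space, f : X → X a non-expanding map, and z₀ ∈ X such that d(z₀, f^n(z₀)) → ∞ and d(z₀, f^n(z₀))/n → c. Then liminf_{n→∞} ( d(z₀, f^n(z₀)) − d(z₀, f^{n+1}(z₀)) ) ≤ −c; in particular there is a strictly increasing sequence (n_k) such that, setting w_k := f^{n_k}(z₀), one has d(z₀,w_k) → ∞ and limsup_{k→∞} ( d(z₀, w_k) − d(z₀, f(w_k)) ) ≤ −c. (Hence the dilation of f at its Denjoy–Wolff point satisfies log λ ≤ −c(f).) -/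
open Filter Metric Topology

/-- for a non-expanding map with diverging orbit and divergence
rate c, liminf (d(z₀,fⁿz₀) - d(z₀,fⁿ⁺¹z₀)) ≤ -c, and there is a strictly
increasing subsequence (n_k) with w_k = f^{n_k}(z₀) diverging and
limsup (d(z₀,w_k) - d(z₀,f w_k)) ≤ -c. -/
theorem dilation_at_denjoy_wolff {X : Type*} [MetricSpace X]
    (f : X → X) (hf : ∀ a b : X, dist (f a) (f b) ≤ dist a b)
    (z₀ : X) (hdiv : Tendsto (fun n : ℕ => dist z₀ (f^[n] z₀)) atTop atTop)
    (c : ℝ) (hrate : Tendsto (fun n : ℕ => dist z₀ (f^[n] z₀) / n) atTop (nhds c)) :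
    Filter.liminf (fun n : ℕ => dist z₀ (f^[n] z₀) - dist z₀ (f^[n + 1] z₀)) atTop ≤ -c ∧
    ∃ nk : ℕ → ℕ, StrictMono nk ∧
      Tendsto (fun k => dist z₀ (f^[nk k] z₀)) atTop atTop ∧
      Filter.limsup (fun k => dist z₀ (f^[nk k] z₀) - dist z₀ (f (f^[nk k] z₀))) atTop ≤ -c := by
  set a : ℕ → ℝ := fun n => dist z₀ (f^[n] z₀) with ha
  set u : ℕ → ℝ := fun n => a n - a (n + 1) with hu
  -- iterates are non-expanding
  have hiter : ∀ (n : ℕ) (x y : X), dist (f^[n] x) (f^[n] y) ≤ dist x y := by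
    intro n
    induction n with
    | zero => intro x y; simp
    | succ n ih =>
      intro x y
      simp only [Function.iterate_succ_apply]
      exact le_trans (ih (f x) (f y)) (hf x y)
  -- u is bounded in absolute value by a 1
  have hub : ∀ n, |u n| ≤ a 1 := by
    intro n
    have h1 : |dist (f^[n] z₀) z₀ - dist (f^[n + 1] z₀) z₀| ≤ dist (f^[n] z₀) (f^[n + 1] z₀) :=
      abs_dist_sub_le _ _ _
    have h2 : dist (f^[n] z₀) (f^[n + 1] z₀) ≤ dist z₀ (f z₀) := by
      have := hiter n z₀ (f z₀)
      simpa [Function.iterate_succ_apply] using this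
    calc |u n| = |dist (f^[n] z₀) z₀ - dist (f^[n + 1] z₀) z₀| := by
          simp [hu, ha, dist_comm]
      _ ≤ dist (f^[n] z₀) (f^[n + 1] z₀) := h1
      _ ≤ a 1 := by simpa [ha] using h2
  have hbdd_le : IsBoundedUnder (· ≤ ·) atTop u :=
    isBoundedUnder_of ⟨a 1, fun n => (abs_le.mp (hub n)).2⟩
  have hbdd_ge : IsBoundedUnder (· ≥ ·) atTop u :=
    isBoundedUnder_of ⟨-(a 1), fun n => (abs_le.mp (hub n)).1⟩
  -- Part 1: liminf u ≤ -c
  have part1 : Filter.liminf u atTop ≤ -c := by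
    by_contra hcon
    push_neg at hcon
    set b : ℝ := (-c + Filter.liminf u atTop) / 2 with hb
    have hb1 : -c < b := by rw [hb]; linarith
    have hb2 : b < Filter.liminf u atTop := by rw [hb]; linarith
    obtain ⟨N, hN⟩ := (eventually_atTop.mp (eventually_lt_of_lt_liminf hb2 hbdd_ge))
    have hstep : ∀ m : ℕ, a (N + m) ≤ a N - m * b := by
      intro m
      induction m with
      | zero => simp
      | succ m ih =>
        have hm : a (N + m) - a (N + m + 1) > b := hN (N + m) (Nat.le_add_right N m)
        have : a (N + m + 1) < a (N + m) - b := by linarith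
        push_cast
        calc a (N + (m + 1)) = a (N + m + 1) := by ring_nf
          _ ≤ a (N + m) - b := le_of_lt this
          _ ≤ a N - m * b - b := by linarith
          _ = a N - (m + 1) * b := by ring
    -- hence a n / n ≤ (a N + N * b)/n - b eventually, giving c ≤ -b < c
    have key : ∀ n ≥ N + 1, a n / n ≤ (a N + N * b) / n - b := by
      intro n hn
      have hn0 : (0 : ℝ) < n := by exact_mod_cast Nat.lt_of_lt_of_le (Nat.succ_pos N) hn
      obtain ⟨m, rfl⟩ := Nat.exists_eq_add_of_le (Nat.le_of_succ_le hn)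
      have h1 : a (N + m) ≤ a N - m * b := hstep m
      have h2 : a (N + m) ≤ (a N + N * b) - ((N + m : ℕ) : ℝ) * b := by push_cast; linarith
      have hne : ((N + m : ℕ) : ℝ) ≠ 0 := ne_of_gt hn0
      have heq2 : (a N + N * b) / ((N + m : ℕ) : ℝ) - b
          = ((a N + N * b) - ((N + m : ℕ) : ℝ) * b) / ((N + m : ℕ) : ℝ) := by
        rw [sub_div, mul_div_cancel_left₀ _ hne]
      rw [heq2]
      exact div_le_div_of_nonneg_right h2 hn0.le
    have hlim2 : Tendsto (fun n : ℕ => (a N + N * b) / n - b) atTop (nhds (-b)) := by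
      have := (tendsto_natCast_atTop_atTop (R := ℝ)).const_div_atTop (a N + N * b)
      simpa using this.sub_const b
    have hle : c ≤ -b := by
      refine le_of_tendsto_of_tendsto hrate hlim2 ?_
      exact eventually_atTop.mpr ⟨N + 1, key⟩
    linarith
  refine ⟨part1, ?_⟩
  -- Part 2: construct the subsequence
  have freq : ∀ k : ℕ, ∀ N : ℕ, ∃ n, N ≤ n ∧ u n < -c + 1 / (k + 1) := by
    intro k N
    have hlt : Filter.liminf u atTop < -c + 1 / (k + 1) := by
      have : (0:ℝ) < 1 / (k + 1) := by positivity
      linarith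
    have := frequently_lt_of_liminf_lt hbdd_le.isCoboundedUnder_ge hlt
    rcases (frequently_atTop.mp this N) with ⟨n, hn1, hn2⟩
    exact ⟨n, hn1, hn2⟩
  choose φ hφ1 hφ2 using freq
  set nk : ℕ → ℕ := fun k => Nat.rec (φ 0 0) (fun k prev => φ (k + 1) (prev + 1)) k with hnk
  have hnk_succ : ∀ k, nk (k + 1) = φ (k + 1) (nk k + 1) := fun k => rfl
  have hmono : StrictMono nk := by
    apply strictMono_nat_of_lt_succ
    intro k
    have := hφ1 (k + 1) (nk k + 1)
    rw [hnk_succ]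
    omega
  have hprop : ∀ k, u (nk k) < -c + 1 / (k + 1) := by
    intro k
    cases k with
    | zero => exact hφ2 0 0
    | succ k => rw [hnk_succ]; exact hφ2 (k + 1) (nk k + 1)
  refine ⟨nk, hmono, hdiv.comp hmono.tendsto_atTop, ?_⟩
  have heq : (fun k => dist z₀ (f^[nk k] z₀) - dist z₀ (f (f^[nk k] z₀))) = fun k => u (nk k) := by
    funext k
    simp [hu, ha, Function.iterate_succ_apply']
  rw [heq]
  refine le_of_forall_pos_le_add ?_
  intro ε hε
  have hbdd2 : IsCoboundedUnder (· ≤ ·) atTop (fun k => u (nk k)) :=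
    Filter.isCoboundedUnder_le_of_le atTop (fun k => (abs_le.mp (hub (nk k))).1)
  refine limsup_le_of_le hbdd2 ?_
  obtain ⟨K, hK⟩ : ∃ K : ℕ, 1 / ((K : ℝ) + 1) ≤ ε := by
    obtain ⟨K, hK⟩ := exists_nat_gt (1 / ε)
    refine ⟨K, ?_⟩
    rw [div_le_iff₀ (by positivity)]
    rw [div_lt_iff₀ hε] at hK
    nlinarith
  refine eventually_atTop.mpr ⟨K, fun k hk => ?_⟩
  have h1 : u (nk k) < -c + 1 / (k + 1) := hprop k
  have h2 : 1 / ((k : ℝ) + 1) ≤ 1 / ((K : ℝ) + 1) := by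
    apply one_div_le_one_div_of_le (by positivity)
    exact_mod_cast Nat.succ_le_succ hk
  have h3 : (1 : ℝ) / (↑k + 1) ≤ ε := le_trans h2 hK
  exact (hprop k).le.trans (add_le_add_right h3 (-c))
end

section
/- Let (X,d) be a metric space, f : X → X a non-expanding map, and (w_n)_{n≥0} a backward orbit with bounded step, i.e. f(w_{n+1}) = w_n for all n and sup_n d(w_n, w_{n+1}) < ∞. Then for every m ≥ 1 the backward m-step σ_m := lim_{n→∞} d(w_n, w_{n+m}) exists (the sequence n ↦ d(w_n,w_{n+m}) is non-decreasing and bounded), and for every p ∈ X and every m ≥ 1, σ_m ≥ m · liminf_{n→∞} ( d(p, w_{n+1}) − d(p, w_n) ). (Hence the dilation at the limit boundary point η satisfies log λ_η ≤ inf_m σ_m/m.) -/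
open Filter Metric Topology

/-- for a backward orbit with bounded step, the backward m-step
σ_m exists (the sequence is non-decreasing and bounded) and satisfies
σ_m ≥ m · liminf (d(p,w_{n+1}) - d(p,w_n)) for every base point p. -/
theorem backward_step_bound {X : Type*} [MetricSpace X]
    (f : X → X) (hf : ∀ a b : X, dist (f a) (f b) ≤ dist a b)
    (w : ℕ → X) (hback : ∀ n : ℕ, f (w (n + 1)) = w n)
    (M : ℝ) (hM : ∀ n : ℕ, dist (w n) (w (n + 1)) ≤ M) :
    ∀ m : ℕ, 1 ≤ m →
      Monotone (fun n => dist (w n) (w (n + m))) ∧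
      ∃ σm : ℝ, Tendsto (fun n => dist (w n) (w (n + m))) atTop (nhds σm) ∧
        ∀ p : X,
          (m : ℝ) * Filter.liminf (fun n => dist p (w (n + 1)) - dist p (w n)) atTop ≤ σm := by
  intro m hm
  -- monotonicity
  have mono : Monotone (fun n => dist (w n) (w (n + m))) := by
    apply monotone_nat_of_le_succ
    intro n
    have h1 : f (w (n + 1)) = w n := hback n
    have h2 : f (w (n + 1 + m)) = w (n + m) := by
      rw [show n + 1 + m = (n + m) + 1 by ring]; exact hback (n + m)
    calc dist (w n) (w (n + m)) = dist (f (w (n + 1))) (f (w (n + 1 + m))) := by rw [h1, h2]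
      _ ≤ dist (w (n + 1)) (w (n + 1 + m)) := hf _ _
  -- bound
  have hbd : ∀ k n : ℕ, dist (w n) (w (n + k)) ≤ k * M := by
    intro k
    induction k with
    | zero => intro n; simp
    | succ k ih =>
      intro n
      calc dist (w n) (w (n + (k + 1)))
          ≤ dist (w n) (w (n + k)) + dist (w (n + k)) (w (n + k + 1)) := by
            have : n + (k + 1) = (n + k) + 1 := by ring
            rw [this]; exact dist_triangle _ _ _
        _ ≤ k * M + M := add_le_add (ih n) (hM (n + k))
        _ = (k + 1 : ℕ) * M := by push_cast; ring
  have hbdd : BddAbove (Set.range fun n => dist (w n) (w (n + m))) := by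
    refine ⟨m * M, ?_⟩
    rintro x ⟨n, rfl⟩
    exact hbd m n
  have htend : Tendsto (fun n => dist (w n) (w (n + m))) atTop
      (nhds (⨆ n, dist (w n) (w (n + m)))) := tendsto_atTop_ciSup mono hbdd
  refine ⟨mono, ⨆ n, dist (w n) (w (n + m)), htend, ?_⟩
  intro p
  set a : ℕ → ℝ := fun n => dist p (w (n + 1)) - dist p (w n) with ha
  have habs : ∀ n, |a n| ≤ M := by
    intro n
    calc |a n| = |dist (w (n + 1)) p - dist (w n) p| := by
          simp only [ha, dist_comm]
      _ ≤ dist (w (n + 1)) (w n) := abs_dist_sub_le _ _ _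
      _ = dist (w n) (w (n + 1)) := dist_comm _ _
      _ ≤ M := hM n
  have hblo : Filter.IsBoundedUnder (· ≥ ·) atTop a :=
    Filter.isBoundedUnder_of ⟨-M, fun n => neg_le_of_abs_le (habs n)⟩
  set L := Filter.liminf a atTop with hL
  set σm := ⨆ n, dist (w n) (w (n + m)) with hσ
  have hm0 : (0 : ℝ) < m := by exact_mod_cast hm
  -- main inequality via ε
  refine le_of_forall_pos_le_add ?_
  intro ε hε
  have hc : L - ε / m < L := by
    have : 0 < ε / m := div_pos hε hm0
    linarith
  have hev : ∀ᶠ n in atTop, L - ε / m < a n :=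
    Filter.eventually_lt_of_lt_liminf hc hblo
  have key : ∀ᶠ n in atTop, (m : ℝ) * L - ε ≤ dist (w n) (w (n + m)) := by
    obtain ⟨N, hN⟩ := Filter.eventually_atTop.mp hev
    refine Filter.eventually_atTop.mpr ⟨N, fun n hn => ?_⟩
    have tel : ∑ j ∈ Finset.range m, a (n + j) = dist p (w (n + m)) - dist p (w n) := by
      have : ∀ j ∈ Finset.range m, a (n + j) =
          (fun j => dist p (w (n + j))) (j + 1) - (fun j => dist p (w (n + j))) j := by
        intro j _
        rfl
      rw [Finset.sum_congr rfl this, Finset.sum_range_sub (fun j => dist p (w (n + j)))]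
      simp
    have hsum : (m : ℝ) * (L - ε / m) ≤ ∑ j ∈ Finset.range m, a (n + j) := by
      have := Finset.card_nsmul_le_sum (Finset.range m) (fun j => a (n + j)) (L - ε / m)
        (fun j _ => le_of_lt (hN (n + j) (le_trans hn (Nat.le_add_right n j))))
      simpa [nsmul_eq_mul] using this
    have hfield : (m : ℝ) * (L - ε / m) = m * L - ε := by
      field_simp
      try ring
    calc (m : ℝ) * L - ε = m * (L - ε / m) := hfield.symm
      _ ≤ ∑ j ∈ Finset.range m, a (n + j) := hsum
      _ = dist p (w (n + m)) - dist p (w n) := tel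
      _ ≤ dist (w n) (w (n + m)) := by
        have := dist_triangle p (w n) (w (n + m))
        have h2 := dist_comm (w (n + m)) p
        linarith [dist_triangle p (w n) (w (n + m))]
  have := ge_of_tendsto htend key
  linarith
end

section
/- (Julia's Lemma) Let (X,d) be a proper geodesic metric space which is δ-hyperbolic for some δ ≥ 0 and has approaching geodesics, i.e. any two asymptotic geodesic rays are strongly asymptotic. Let f : X → X be non-expanding, p ∈ X, γ a geodesic ray, λ > 0, and let (w_n) be a sequence in X converging to the boundary point of γ (i.e. (w_n|γ(m))_p → ∞ as n,m → ∞) such that d(w_n,p) − d(f(w_n),p) → log λ. Then there exists a geodesic ray σ such that B_σ(f(z), p) ≤ B_γ(z,p) + log λ for every z ∈ X; in particular, for every R > 0, f maps the horoball { z : B_γ(z,p) < log R } into the horoball { z : B_σ(z,p) < log(λR) }. -/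
open Filter Metric Topology

lemma ulim {X : Type*} [MetricSpace X] [ProperSpace X] (U : Ultrafilter ℕ) (c : ℕ → X)
    (p : X) (R : ℝ) (h : ∀ n, dist (c n) p ≤ R) : ∃ y, Tendsto c (U : Filter ℕ) (𝓝 y) := by
  obtain ⟨y, -, hy⟩ := (isCompact_closedBall p R).ultrafilter_le_nhds (U.map c)
    (by rw [Ultrafilter.coe_map, Filter.le_principal_iff, Filter.mem_map]
        exact Filter.univ_mem' fun n => h n)
  exact ⟨y, hy⟩

/-- Julia's Lemma: in a proper geodesic δ-hyperbolic space with
approaching geodesics, if (w_n) converges to the boundary point of the geodesic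
ray γ and d(w_n,p) - d(f(w_n),p) → log λ, then there is a geodesic ray σ with
B_σ(f z, p) ≤ B_γ(z, p) + log λ for all z; in particular f maps the horoball
{B_γ(·,p) < log R} into {B_σ(·,p) < log(λR)} for every R > 0. -/
theorem julia_lemma {X : Type*} [MetricSpace X] [ProperSpace X]
    (hX : IsGeodesicSpace X)
    (δ : ℝ) (hδ : 0 ≤ δ) (hhyp : IsDeltaHyperbolic X δ)
    (happ : ApproachingGeodesics X)
    (f : X → X) (hf : ∀ a b : X, dist (f a) (f b) ≤ dist a b)
    (p : X) (γ : ℝ → X) (hγ : IsGeodesicRay γ)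
    (lam : ℝ) (hlam : 0 < lam)
    (w : ℕ → X)
    (hw : ∀ C > (0 : ℝ), ∃ N : ℕ, ∀ n ≥ N, ∀ m : ℝ, (N : ℝ) ≤ m →
      C ≤ gromovProduct p (w n) (γ m))
    (hdil : Tendsto (fun n => dist (w n) p - dist (f (w n)) p) atTop (nhds (Real.log lam)))
    (Bγ : X → ℝ)
    (hBγ : ∀ z : X, Tendsto (fun t => dist z (γ t) - dist (γ t) p) atTop (nhds (Bγ z))) :
    ∃ (σ : ℝ → X) (Bσ : X → ℝ), IsGeodesicRay σ ∧
      (∀ z : X, Tendsto (fun t => dist z (σ t) - dist (σ t) p) atTop (nhds (Bσ z))) ∧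
      (∀ z : X, Bσ (f z) ≤ Bγ z + Real.log lam) ∧
      (∀ R > (0 : ℝ), f '' {z : X | Bγ z < Real.log R} ⊆
        {z : X | Bσ z < Real.log (lam * R)}) := by
    classical
  set u : ℕ → X := fun n => f (w n) with hu
  set sq : ℕ → ℝ := fun n => dist (w n) p - dist (u n) p with hsq
  have hdil' : Tendsto sq atTop (𝓝 (Real.log lam)) := hdil
  set a0 : ℝ := dist (γ 0) p with ha0def
  have ha0 : 0 ≤ a0 := dist_nonneg
  -- ray γ distance estimates
  have hγd : ∀ t : ℝ, 0 ≤ t → t - a0 ≤ dist (γ t) p ∧ dist (γ t) p ≤ t + a0 := by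
    intro t ht
    have h1 : dist (γ t) (γ 0) = t := by
      rw [hγ t 0 ht le_rfl, sub_zero, abs_of_nonneg ht]
    have hc : dist p (γ 0) = a0 := by rw [dist_comm]
    constructor
    · have h2 := dist_triangle (γ t) p (γ 0)
      rw [h1, hc] at h2
      linarith
    · have h2 := dist_triangle (γ t) (γ 0) p
      rw [h1] at h2
      linarith
  -- geodesic selector
  have hGeo : ∀ x y : X, ∃ g : ℝ → X, g 0 = x ∧ (∀ t, dist x y ≤ t → g t = y) ∧
      ∀ s' t' : ℝ, dist (g s') (g t') =
        |min (max s' 0) (dist x y) - min (max t' 0) (dist x y)| := by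
    intro x y
    obtain ⟨g0, h0, h1, h2⟩ := hX x y
    have hd : (0:ℝ) ≤ dist x y := dist_nonneg
    refine ⟨fun t => g0 (min (max t 0) (dist x y)), ?_, ?_, ?_⟩
    · show g0 (min (max (0:ℝ) 0) (dist x y)) = x
      rw [max_self, min_eq_left hd, h0]
    · intro t ht
      have h0t : (0:ℝ) ≤ t := le_trans hd ht
      show g0 (min (max t 0) (dist x y)) = y
      rw [max_eq_left h0t, min_eq_right ht, h1]
    · intro s' t'
      exact h2 _ ⟨le_min (le_max_right _ _) hd, min_le_right _ _⟩
        _ ⟨le_min (le_max_right _ _) hd, min_le_right _ _⟩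
  choose G hG0 hGe hGd using hGeo
  have hGt : ∀ x y : X, ∀ t : ℝ, 0 ≤ t → t ≤ dist x y → dist (G x y t) x = t := by
    intro x y t ht hty
    have h := hGd x y t 0
    rw [hG0 x y] at h
    rw [h, max_eq_left ht, min_eq_left hty, max_self, min_eq_left dist_nonneg, sub_zero,
      abs_of_nonneg ht]
  have hGe2 : ∀ x y : X, ∀ t : ℝ, 0 ≤ t → t ≤ dist x y → dist (G x y t) y = dist x y - t := by
    intro x y t ht hty
    have h := hGd x y t (dist x y)
    rw [hGe x y (dist x y) le_rfl] at h
    rw [h, max_eq_left ht, min_eq_left hty, max_eq_left dist_nonneg, min_self,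
      abs_of_nonpos (by linarith), neg_sub]
  have hGball : ∀ x y : X, ∀ t : ℝ, dist (G x y t) x ≤ |t| := by
    intro x y t
    have h := hGd x y t 0
    rw [hG0 x y] at h
    rw [h, max_self, min_eq_left dist_nonneg, sub_zero,
      abs_of_nonneg (le_min (le_max_right _ _) dist_nonneg)]
    exact le_trans (min_le_left _ _) (max_le (le_abs_self t) (abs_nonneg t))
  -- ultrafilter
  set U : Ultrafilter ℕ := Filter.hyperfilter ℕ with hUdef
  have hUle : (U : Filter ℕ) ≤ atTop := by
    rw [← Nat.cofinite_eq_atTop]; exact Filter.hyperfilter_le_cofinite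
  have hUev : ∀ {q : ℕ → Prop}, (∀ᶠ n in atTop, q n) → (∀ᶠ n in (U : Filter ℕ), q n) :=
    fun h => h.filter_mono hUle
  -- divergence of the sequences
  have hDw : Tendsto (fun n => dist (w n) p) atTop atTop := by
    rw [Filter.tendsto_atTop]
    intro C
    obtain ⟨N, hN⟩ := hw (max C 1) (lt_of_lt_of_le one_pos (le_max_right C 1))
    refine eventually_atTop.2 ⟨N, fun n hn => ?_⟩
    have h1 := hN n hn (N : ℝ) le_rfl
    have h2 := dist_triangle (γ (N:ℝ)) (w n) p
    simp only [gromovProduct] at h1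
    have h3 := le_max_left C 1
    rw [dist_comm (γ (N:ℝ)) (w n)] at h2
    linarith
  have hD : Tendsto (fun n => dist (u n) p) atTop atTop := by
    rw [Filter.tendsto_atTop]; intro C
    have h1 : ∀ᶠ n in atTop, sq n ≤ Real.log lam + 1 :=
      hdil'.eventually (eventually_le_nhds (lt_add_one _))
    have h2 := hDw.eventually (eventually_ge_atTop (C + (Real.log lam + 1)))
    filter_upwards [h1, h2] with n e1 e2
    have e3 : dist (u n) p = dist (w n) p - sq n := by simp only [hsq]; ring
    linarith
  -- rays as ultrafilter limits of geodesic segments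
  have mkray : ∀ (q : X) (v : ℕ → X), Tendsto (fun n => dist q (v n)) atTop atTop →
      ∃ σ : ℝ → X, (∀ t, Tendsto (fun n => G q (v n) t) (U : Filter ℕ) (𝓝 (σ t))) ∧
        IsGeodesicRay σ ∧ σ 0 = q := by
    intro q v hv
    have hex : ∀ t : ℝ, ∃ y, Tendsto (fun n => G q (v n) t) (U : Filter ℕ) (𝓝 y) :=
      fun t => ulim U _ q |t| (fun n => hGball q (v n) t)
    choose σ hσ using hex
    refine ⟨σ, hσ, ?_, ?_⟩
    · intro s' t' hs' ht'
      have hEv : (fun n => dist (G q (v n) s') (G q (v n) t'))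
          =ᶠ[(U : Filter ℕ)] (fun _ => |s' - t'|) := by
        filter_upwards [hUev (hv.eventually (eventually_ge_atTop (max s' t')))] with n hn
        rw [hGd, max_eq_left hs', max_eq_left ht',
          min_eq_left (le_trans (le_max_left _ _) hn),
          min_eq_left (le_trans (le_max_right _ _) hn)]
      have h1 := (hσ s').dist (hσ t')
      exact tendsto_nhds_unique (Tendsto.congr' hEv h1) tendsto_const_nhds
    · have h1 := (hσ 0).congr (fun n => hG0 q (v n))
      exact tendsto_nhds_unique h1 tendsto_const_nhds
  obtain ⟨γ', hγ'lim, hγ'ray, hγ'0⟩ := mkray p w (hDw.congr (fun n => dist_comm (w n) p))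
  obtain ⟨σ, hσlim, hσray, hσ0⟩ := mkray p u (hD.congr (fun n => dist_comm (u n) p))
  have hγ'p : ∀ t : ℝ, 0 ≤ t → dist (γ' t) p = t := by
    intro t ht
    have h := hγ'ray t 0 ht le_rfl
    rw [hγ'0] at h
    rw [h, sub_zero, abs_of_nonneg ht]
  have hσp : ∀ t : ℝ, 0 ≤ t → dist (σ t) p = t := by
    intro t ht
    have h := hσray t 0 ht le_rfl
    rw [hσ0] at h
    rw [h, sub_zero, abs_of_nonneg ht]
  -- horofunction-type limits along U
  have hexh : ∀ z : X, ∃ r : ℝ,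
      Tendsto (fun n => dist z (u n) - dist (u n) p) (U : Filter ℕ) (𝓝 r) := by
    intro z
    apply ulim U _ (0:ℝ) (dist z p)
    intro n
    rw [Real.dist_eq, sub_zero, dist_comm (u n) p]
    exact abs_dist_sub_le z p (u n)
  choose h hh using hexh
  have hexh' : ∀ z : X, ∃ r : ℝ,
      Tendsto (fun n => dist z (w n) - dist (w n) p) (U : Filter ℕ) (𝓝 r) := by
    intro z
    apply ulim U _ (0:ℝ) (dist z p)
    intro n
    rw [Real.dist_eq, sub_zero, dist_comm (w n) p]
    exact abs_dist_sub_le z p (w n)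
  choose h' hh' using hexh'
  -- step 8 : h (f z) ≤ h' z + log lam
  have hstep8 : ∀ z : X, h (f z) ≤ h' z + Real.log lam := by
    intro z
    have hEv : ∀ n, dist (f z) (u n) - dist (u n) p ≤ (dist z (w n) - dist (w n) p) + sq n := by
      intro n
      have h1 := hf z (w n)
      have e : dist (u n) p = dist (w n) p - sq n := by simp only [hsq]; ring
      rw [e]
      show dist (f z) (f (w n)) - _ ≤ _
      linarith
    exact le_of_tendsto_of_tendsto (hh (f z)) ((hh' z).add (hdil'.mono_left hUle))
      (Filter.Eventually.of_forall hEv)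
  -- step 9 : h' z ≤ d(z, γ' t) - t
  have hstep9 : ∀ z : X, ∀ t : ℝ, 0 ≤ t → h' z ≤ dist z (γ' t) - t := by
    intro z t ht
    have hEv : ∀ᶠ n in (U : Filter ℕ),
        dist z (w n) - dist (w n) p ≤ dist z (G p (w n) t) - t := by
      filter_upwards [hUev (hDw.eventually (eventually_ge_atTop t))] with n hn
      have h1 : dist (G p (w n) t) (w n) = dist p (w n) - t :=
        hGe2 p (w n) t ht (by rwa [dist_comm])
      have h2 := dist_triangle z (G p (w n) t) (w n)
      have h3 := dist_comm (w n) p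
      linarith
    exact le_of_tendsto_of_tendsto (hh' z)
      ((tendsto_const_nhds.dist (hγ'lim t)).sub_const t) hEv
  -- E1 : γ and γ' are asymptotic
  have hE1 : ∀ t : ℝ, 0 ≤ t → dist (γ t) (γ' t) ≤ 3 * a0 + 4 * δ := by
    intro t ht
    have hEv : ∀ᶠ n in (U : Filter ℕ), dist (γ t) (G p (w n) t) ≤ 3 * a0 + 4 * δ := by
      obtain ⟨N, hN⟩ := hw (t + a0 + 1) (by linarith)
      filter_upwards [hUev (hDw.eventually (eventually_ge_atTop t)),
        hUev (eventually_ge_atTop N)] with n hn1 hn2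
      set m : ℝ := max t (N : ℝ) with hm
      have hmt : t ≤ m := le_max_left _ _
      have hm0 : 0 ≤ m := le_trans ht hmt
      have hC : t + a0 + 1 ≤ gromovProduct p (w n) (γ m) := hN n hn2 m (le_max_right _ _)
      obtain ⟨hdt1, hdt2⟩ := hγd t ht
      obtain ⟨hdm1, hdm2⟩ := hγd m hm0
      have hgtm : dist (γ t) (γ m) = m - t := by
        rw [hγ t m ht hm0, abs_of_nonpos (by linarith), neg_sub]
      have g1 : dist (γ t) p - a0 ≤ gromovProduct p (γ t) (γ m) := by
        simp only [gromovProduct]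
        linarith [hgtm]
      have gsymm : gromovProduct p (γ m) (w n) = gromovProduct p (w n) (γ m) := by
        simp only [gromovProduct]
        rw [dist_comm (γ m) (w n)]
        ring
      have hyp1 := hhyp p (γ t) (w n) (γ m)
      have g2 : dist (γ t) p - a0 - δ ≤ gromovProduct p (γ t) (w n) := by
        have hmin : dist (γ t) p - a0 ≤
            min (gromovProduct p (γ t) (γ m)) (gromovProduct p (γ m) (w n)) :=
          le_min g1 (by rw [gsymm]; linarith)
        linarith
      have hα1 : dist (G p (w n) t) p = t := hGt p (w n) t ht (by rwa [dist_comm])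
      have hα2 : dist (G p (w n) t) (w n) = dist p (w n) - t :=
        hGe2 p (w n) t ht (by rwa [dist_comm])
      have g3 : gromovProduct p (w n) (G p (w n) t) = t := by
        simp only [gromovProduct]
        rw [dist_comm (w n) (G p (w n) t), hα1, hα2, dist_comm p (w n)]
        ring
      have hyp2 := hhyp p (γ t) (G p (w n) t) (w n)
      have g4 : dist (γ t) p - a0 - 2*δ ≤ gromovProduct p (γ t) (G p (w n) t) := by
        have hmin : dist (γ t) p - a0 - δ ≤
            min (gromovProduct p (γ t) (w n)) (gromovProduct p (w n) (G p (w n) t)) :=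
          le_min g2 (by rw [g3]; linarith)
        linarith
      have hexp : dist (γ t) (G p (w n) t) =
          dist (γ t) p + dist (G p (w n) t) p - 2 * gromovProduct p (γ t) (G p (w n) t) := by
        simp only [gromovProduct]; ring
      rw [hexp, hα1]
      linarith
    exact le_of_tendsto (tendsto_const_nhds.dist (hγ'lim t)) hEv
  obtain ⟨T, S, hT, hS, hTS⟩ := happ γ γ' hγ hγ'ray ⟨3 * a0 + 4 * δ, hE1⟩
  -- step 11 : h' z ≤ Bγ z
  have hstep11 : ∀ z : X, h' z ≤ Bγ z := by
    intro z
    have hcomp : Tendsto (fun t : ℝ => t + T) atTop atTop :=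
      tendsto_atTop_add_const_right atTop T tendsto_id
    have hlim : Tendsto (fun t => (dist z (γ (t + T)) - dist (γ (t + T)) p) +
        2 * dist (γ (t + T)) (γ' (t + S))) atTop (𝓝 (Bγ z + 2 * 0)) :=
      ((hBγ z).comp hcomp).add (hTS.const_mul 2)
    have hEv : ∀ᶠ t in atTop, h' z ≤ (dist z (γ (t + T)) - dist (γ (t + T)) p) +
        2 * dist (γ (t + T)) (γ' (t + S)) := by
      filter_upwards [eventually_ge_atTop (0:ℝ)] with t ht
      have h9 := hstep9 z (t + S) (by linarith)
      have htri1 := dist_triangle z (γ (t + T)) (γ' (t + S))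
      have htri2 := dist_triangle (γ (t + T)) (γ' (t + S)) p
      have hp9 : dist (γ' (t + S)) p = t + S := hγ'p (t + S) (by linarith)
      linarith
    have := ge_of_tendsto hlim hEv
    linarith
  -- Busemann function of σ
  set Bσ : X → ℝ := fun z => ⨅ t : ℝ, (dist z (σ (max t 0)) - max t 0) with hBσdef
  have hmono : ∀ z : X, Antitone (fun t : ℝ => dist z (σ (max t 0)) - max t 0) := by
    intro z t1 t2 h12
    have h1 : (0:ℝ) ≤ max t1 0 := le_max_right _ _
    have h2 : (0:ℝ) ≤ max t2 0 := le_max_right _ _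
    have h12' : max t1 0 ≤ max t2 0 := max_le_max h12 le_rfl
    have hd : dist (σ (max t1 0)) (σ (max t2 0)) = max t2 0 - max t1 0 := by
      rw [hσray _ _ h1 h2, abs_of_nonpos (by linarith), neg_sub]
    have htri := dist_triangle z (σ (max t1 0)) (σ (max t2 0))
    simp only
    linarith
  have hbdd : ∀ z : X, BddBelow (Set.range (fun t : ℝ => dist z (σ (max t 0)) - max t 0)) := by
    intro z
    refine ⟨-dist z p, ?_⟩
    rintro r ⟨t, rfl⟩
    have h1 : (0:ℝ) ≤ max t 0 := le_max_right _ _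
    have h2 : dist (σ (max t 0)) p = max t 0 := hσp _ h1
    have htri := dist_triangle (σ (max t 0)) z p
    rw [dist_comm (σ (max t 0)) z] at htri
    simp only
    linarith
  have hBσlim : ∀ z : X, Tendsto (fun t => dist z (σ t) - dist (σ t) p) atTop (𝓝 (Bσ z)) := by
    intro z
    have h1 : Tendsto (fun t : ℝ => dist z (σ (max t 0)) - max t 0) atTop (𝓝 (Bσ z)) :=
      tendsto_atTop_ciInf (hmono z) (hbdd z)
    refine Tendsto.congr' ?_ h1
    filter_upwards [eventually_ge_atTop (0:ℝ)] with t ht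
    rw [max_eq_left ht, hσp t ht]
  have hBσle : ∀ z : X, ∀ t : ℝ, 0 ≤ t → Bσ z ≤ dist z (σ t) - t := by
    intro z t ht
    have h1 : Bσ z ≤ dist z (σ (max t 0)) - max t 0 := ciInf_le (hbdd z) t
    rwa [max_eq_left ht] at h1
  -- step 13 : Bσ z ≤ h z
  have hstep13 : ∀ z : X, Bσ z ≤ h z := by
    intro z
    set a : ℝ := dist z p with hadef
    have ha : 0 ≤ a := dist_nonneg
    have hLz : Tendsto (fun n => dist z (u n)) atTop atTop := by
      rw [Filter.tendsto_atTop]; intro C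
      filter_upwards [hD.eventually (eventually_ge_atTop (C + a))] with n hn
      have htri := dist_triangle (u n) z p
      rw [dist_comm (u n) z] at htri
      linarith
    obtain ⟨β, hβlim, hβray, hβ0⟩ := mkray z u hLz
    have hβz : ∀ t : ℝ, 0 ≤ t → dist (β t) z = t := by
      intro t ht
      have hb := hβray t 0 ht le_rfl
      rw [hβ0] at hb
      rw [hb, sub_zero, abs_of_nonneg ht]
    have hE2 : ∀ t : ℝ, 0 ≤ t → dist (σ t) (β t) ≤ 3 * a + 2 * δ := by
      intro t ht
      have hEv : ∀ᶠ n in (U : Filter ℕ),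
          dist (G p (u n) t) (G z (u n) t) ≤ 3 * a + 2 * δ := by
        filter_upwards [hUev (hD.eventually (eventually_ge_atTop t)),
          hUev (hLz.eventually (eventually_ge_atTop t))] with n hn1 hn2
        have hA1 : dist (G p (u n) t) p = t := hGt p (u n) t ht (by rwa [dist_comm])
        have hA2 : dist (G p (u n) t) (u n) = dist p (u n) - t :=
          hGe2 p (u n) t ht (by rwa [dist_comm])
        have hB1 : dist (G z (u n) t) z = t := hGt z (u n) t ht hn2
        have hB2 : dist (G z (u n) t) (u n) = dist z (u n) - t := hGe2 z (u n) t ht hn2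
        have hBp1 : t - a ≤ dist (G z (u n) t) p := by
          have htri := dist_triangle (G z (u n) t) z p
          have htri2 := dist_triangle (G z (u n) t) p z
          have hcz := dist_comm p z
          linarith
        have hBp2 : dist (G z (u n) t) p ≤ t + a := by
          have htri := dist_triangle (G z (u n) t) z p
          linarith
        have hDL : dist z (u n) - a ≤ dist p (u n) := by
          have htri := dist_triangle z p (u n)
          linarith
        have g1 : gromovProduct p (G p (u n) t) (u n) = t := by
          simp only [gromovProduct]
          rw [hA1, hA2, dist_comm (u n) p]
          ring
        have g2 : t - a ≤ gromovProduct p (u n) (G z (u n) t) := by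
          simp only [gromovProduct]
          rw [dist_comm (u n) (G z (u n) t), hB2, dist_comm (u n) p]
          linarith
        have hyp := hhyp p (G p (u n) t) (G z (u n) t) (u n)
        have g3 : t - a - δ ≤ gromovProduct p (G p (u n) t) (G z (u n) t) := by
          have hmin : t - a ≤
              min (gromovProduct p (G p (u n) t) (u n)) (gromovProduct p (u n) (G z (u n) t)) :=
            le_min (by rw [g1]; linarith) g2
          linarith
        have hexp : dist (G p (u n) t) (G z (u n) t) =
            dist (G p (u n) t) p + dist (G z (u n) t) p -
              2 * gromovProduct p (G p (u n) t) (G z (u n) t) := by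
          simp only [gromovProduct]; ring
        rw [hexp, hA1]
        linarith
      exact le_of_tendsto ((hσlim t).dist (hβlim t)) hEv
    obtain ⟨T2, S2, hT2, hS2, hTS2⟩ := happ σ β hσray hβray ⟨3 * a + 2 * δ, hE2⟩
    have hb1 : Bσ z ≤ S2 - T2 := by
      have hEv : ∀ᶠ t in atTop, Bσ z ≤ (S2 - T2) + dist (σ (t + T2)) (β (t + S2)) := by
        filter_upwards [eventually_ge_atTop (0:ℝ)] with t ht
        have h1 := hBσle z (t + T2) (by linarith)
        have h2 := dist_triangle z (β (t + S2)) (σ (t + T2))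
        have h3 : dist z (β (t + S2)) = t + S2 := by
          rw [dist_comm]; exact hβz _ (by linarith)
        rw [dist_comm (β (t + S2)) (σ (t + T2))] at h2
        linarith
      have hlim2 : Tendsto (fun t => (S2 - T2) + dist (σ (t + T2)) (β (t + S2))) atTop
          (𝓝 ((S2 - T2) + 0)) := tendsto_const_nhds.add hTS2
      have := ge_of_tendsto hlim2 hEv
      linarith
    have hb2 : S2 - T2 ≤ h z := by
      have key : ∀ t : ℝ, 0 ≤ t → (t + S2) - dist (β (t + S2)) p ≤ h z := by
        intro t ht
        have hEv : ∀ᶠ n in (U : Filter ℕ),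
            (t + S2) - dist (G z (u n) (t + S2)) p ≤ dist z (u n) - dist (u n) p := by
          filter_upwards [hUev (hLz.eventually (eventually_ge_atTop (t + S2)))] with n hn
          have h1 : dist (G z (u n) (t + S2)) (u n) = dist z (u n) - (t + S2) :=
            hGe2 z (u n) _ (by linarith) hn
          have h2 := dist_triangle (u n) (G z (u n) (t + S2)) p
          rw [dist_comm (u n) (G z (u n) (t + S2))] at h2
          linarith
        exact le_of_tendsto_of_tendsto
          (tendsto_const_nhds.sub ((hβlim (t + S2)).dist tendsto_const_nhds)) (hh z) hEv
      have hEv2 : ∀ᶠ t in atTop, (S2 - T2) - dist (σ (t + T2)) (β (t + S2)) ≤ h z := by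
        filter_upwards [eventually_ge_atTop (0:ℝ)] with t ht
        have h1 := key t ht
        have h2 := dist_triangle (β (t + S2)) (σ (t + T2)) p
        have h3 : dist (σ (t + T2)) p = t + T2 := hσp _ (by linarith)
        rw [dist_comm (β (t + S2)) (σ (t + T2))] at h2
        linarith
      have hlim3 : Tendsto (fun t => (S2 - T2) - dist (σ (t + T2)) (β (t + S2))) atTop
          (𝓝 ((S2 - T2) - 0)) := tendsto_const_nhds.sub hTS2
      have := le_of_tendsto hlim3 hEv2
      linarith
    linarith
  -- conclusion
  have hmain : ∀ z : X, Bσ (f z) ≤ Bγ z + Real.log lam := by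
    intro z
    have h1 := hstep13 (f z)
    have h2 := hstep8 z
    have h3 := hstep11 z
    linarith
  refine ⟨σ, Bσ, hσray, hBσlim, hmain, ?_⟩
  rintro R hR x ⟨z, hz, rfl⟩
  have h1 := hmain z
  have h2 : Bγ z < Real.log R := hz
  have hlog : Real.log (lam * R) = Real.log lam + Real.log R :=
    Real.log_mul (ne_of_gt hlam) (ne_of_gt hR)
  simp only [Set.mem_setOf_eq]
  linarith
end

section
/- Let (X,d) be a proper geodesic metric space which is δ-hyperbolic for some δ ≥ 0, and let f : X → X be a bijective isometry with diverging forward orbits, i.e. d(x₀, f^n(x₀)) → ∞. Let γ : ℝ → X be a geodesic line with γ(0) = x₀ and suppose there is R > 0 such that for every n ≥ 0 there exists t ≥ 0 with d(f^n(x₀), γ(t)) ≤ R (the forward orbit lies in a geodesic region around γ|_{[0,∞)}). Then sup_{n≥0} ( f^n(x₀) | f^{−n}(x₀) )_{x₀} < ∞; hence f is a hyperbolic isometry. -/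
open Filter Metric Topology

/-- a bijective isometry with diverging forward orbit contained in
a geodesic region around a geodesic line through the base point is hyperbolic:
the Gromov products of forward and backward iterates stay bounded. -/
theorem isometry_hyperbolic_of_orbit_in_geodesicRegion {X : Type*} [MetricSpace X]
    [ProperSpace X] (hX : IsGeodesicSpace X)
    (δ : ℝ) (hδ : 0 ≤ δ) (hhyp : IsDeltaHyperbolic X δ)
    (e : X ≃ᵢ X) (x₀ : X)
    (hdiv : Tendsto (fun n : ℕ => dist x₀ ((⇑e)^[n] x₀)) atTop atTop)
    (γ : ℝ → X) (hγ : ∀ s t : ℝ, dist (γ s) (γ t) = |s - t|) (hγ0 : γ 0 = x₀)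
    (R : ℝ) (hR : 0 < R)
    (horb : ∀ n : ℕ, ∃ t : ℝ, 0 ≤ t ∧ dist ((⇑e)^[n] x₀) (γ t) ≤ R) :
    ∃ M : ℝ, ∀ n : ℕ, gromovProduct x₀ ((⇑e)^[n] x₀) ((⇑e.symm)^[n] x₀) ≤ M := by
  classical
  -- key iterate identities
  have hiso : ∀ (m : ℕ) (a b : X), dist ((⇑e)^[m] a) ((⇑e)^[m] b) = dist a b := by
    intro m
    induction m with
    | zero => intro a b; simp
    | succ k ih =>
      intro a b
      simp only [Function.iterate_succ_apply]
      rw [ih (e a) (e b)]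
      exact e.isometry.dist_eq a b
  have hinv : ∀ (m : ℕ) (x : X), (⇑e)^[m] ((⇑e.symm)^[m] x) = x := by
    intro m
    exact Function.LeftInverse.iterate (fun x => e.apply_symm_apply x) m
  have hsymm : ∀ m : ℕ, dist x₀ ((⇑e.symm)^[m] x₀) = dist x₀ ((⇑e)^[m] x₀) := by
    intro m
    calc dist x₀ ((⇑e.symm)^[m] x₀)
        = dist ((⇑e)^[m] x₀) ((⇑e)^[m] ((⇑e.symm)^[m] x₀)) := (hiso m _ _).symm
      _ = dist ((⇑e)^[m] x₀) x₀ := by rw [hinv]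
      _ = dist x₀ ((⇑e)^[m] x₀) := dist_comm _ _
  have hcross : ∀ m : ℕ,
      dist ((⇑e)^[m] x₀) ((⇑e.symm)^[m] x₀) = dist x₀ ((⇑e)^[2*m] x₀) := by
    intro m
    calc dist ((⇑e)^[m] x₀) ((⇑e.symm)^[m] x₀)
        = dist ((⇑e)^[m] ((⇑e)^[m] x₀)) ((⇑e)^[m] ((⇑e.symm)^[m] x₀)) := (hiso m _ _).symm
      _ = dist ((⇑e)^[2*m] x₀) x₀ := by rw [hinv, two_mul, Function.iterate_add_apply]
      _ = dist x₀ ((⇑e)^[2*m] x₀) := dist_comm _ _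
  -- product formula
  have hprod : ∀ n : ℕ, gromovProduct x₀ ((⇑e)^[n] x₀) ((⇑e.symm)^[n] x₀)
      = dist x₀ ((⇑e)^[n] x₀) - dist x₀ ((⇑e)^[2*n] x₀) / 2 := by
    intro n
    unfold gromovProduct
    rw [dist_comm ((⇑e)^[n] x₀) x₀, dist_comm ((⇑e.symm)^[n] x₀) x₀, hsymm, hcross]
    ring
  -- distance from x₀ along γ
  have hx0γ : ∀ t : ℝ, 0 ≤ t → dist x₀ (γ t) = t := by
    intro t ht
    rw [← hγ0, hγ]
    rw [abs_of_nonpos (by linarith)]; ring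
  -- choose N beyond which orbit distance exceeds 4R
  obtain ⟨N, hN⟩ := Filter.eventually_atTop.1 (hdiv.eventually_gt_atTop (4 * R))
  refine ⟨2 * R + ∑ k ∈ Finset.range N, dist x₀ ((⇑e)^[k] x₀), fun n => ?_⟩
  have hsum : (0:ℝ) ≤ ∑ k ∈ Finset.range N, dist x₀ ((⇑e)^[k] x₀) :=
    Finset.sum_nonneg fun _ _ => dist_nonneg
  rw [hprod]
  by_cases hn : n < N
  · have h1 : dist x₀ ((⇑e)^[n] x₀) ≤ ∑ k ∈ Finset.range N, dist x₀ ((⇑e)^[k] x₀) :=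
      Finset.single_le_sum (f := fun k => dist x₀ ((⇑e)^[k] x₀))
        (fun _ _ => dist_nonneg) (Finset.mem_range.2 hn)
    have h2 : (0:ℝ) ≤ dist x₀ ((⇑e)^[2*n] x₀) := dist_nonneg
    linarith
  · push_neg at hn
    have hD : 4 * R < dist x₀ ((⇑e)^[2*n] x₀) := hN (2*n) (by omega)
    obtain ⟨t, ht0, htR⟩ := horb n
    obtain ⟨s, hs0, hsR⟩ := horb (2*n)
    set dn := dist x₀ ((⇑e)^[n] x₀) with hdn
    set D := dist x₀ ((⇑e)^[2*n] x₀) with hDdef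
    -- |t - dn| ≤ R
    have ht_dn : |t - dn| ≤ R := by
      have := abs_dist_sub_le (γ t) ((⇑e)^[n] x₀) x₀
      rw [dist_comm (γ t) x₀, hx0γ t ht0, dist_comm (γ t) ((⇑e)^[n] x₀),
        dist_comm ((⇑e)^[n] x₀) x₀] at this
      exact le_trans this htR
    have hs_D : |s - D| ≤ R := by
      have := abs_dist_sub_le (γ s) ((⇑e)^[2*n] x₀) x₀
      rw [dist_comm (γ s) x₀, hx0γ s hs0, dist_comm (γ s) ((⇑e)^[2*n] x₀),
        dist_comm ((⇑e)^[2*n] x₀) x₀] at this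
      exact le_trans this hsR
    -- dist (e^[n] x₀) (e^[2n] x₀) = dn
    have hmid : dist ((⇑e)^[n] x₀) ((⇑e)^[2*n] x₀) = dn := by
      rw [hdn]
      calc dist ((⇑e)^[n] x₀) ((⇑e)^[2*n] x₀)
          = dist ((⇑e)^[n] x₀) ((⇑e)^[n] ((⇑e)^[n] x₀)) := by
            rw [two_mul, Function.iterate_add_apply]
        _ = dist x₀ ((⇑e)^[n] x₀) := by
            conv_lhs => rw [show (⇑e)^[n] x₀ = (⇑e)^[n] x₀ from rfl]
            rw [show dist ((⇑e)^[n] x₀) ((⇑e)^[n] ((⇑e)^[n] x₀)) = dist x₀ ((⇑e)^[n] x₀)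
              from hiso n x₀ ((⇑e)^[n] x₀)]
    -- |t - s| ≥ dn - 2R
    have hts : dn - 2 * R ≤ |t - s| := by
      have h1 : dn ≤ dist ((⇑e)^[n] x₀) (γ t) + dist (γ t) (γ s)
          + dist (γ s) ((⇑e)^[2*n] x₀) := by
        rw [← hmid]
        exact dist_triangle4 _ _ _ _
      rw [hγ t s, dist_comm (γ s) ((⇑e)^[2*n] x₀)] at h1
      linarith
    rcases abs_cases (t - dn) with ⟨e1, _⟩ | ⟨e1, _⟩ <;>
      rcases abs_cases (s - D) with ⟨e2, _⟩ | ⟨e2, _⟩ <;>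
      rcases abs_cases (t - s) with ⟨e3, _⟩ | ⟨e3, _⟩ <;>
      rw [e1] at ht_dn <;> rw [e2] at hs_D <;> rw [e3] at hts <;>
      linarith
end

section
/- Let n ≥ 1 and let P : ℂⁿ → ℝ be a convex function with P ≥ 0 and P(0) = 0 such that for all z, w ∈ ℂⁿ the function t ↦ P(z + t·w), t ∈ ℝ, is a polynomial function of t, and such that P is non-degenerate, i.e. the zero set W := { z ∈ ℂⁿ : P(z) = 0 } contains no complex affine line. Then W is an ℝ-linear subspace of ℂⁿ which is totally real: for every z ∈ W with z ≠ 0 one has P(i·z) ≠ 0, i.e. W ∩ (i·W) = {0}. -/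
/-- the zero set of a non-negative, non-degenerate convex
real-polynomial function P on ℂⁿ with P(0) = 0 is a totally real ℝ-linear
subspace of ℂⁿ. -/
theorem zero_set_totally_real (n : ℕ) (hn : 1 ≤ n) (P : (Fin n → ℂ) → ℝ)
    (hconv : ConvexOn ℝ Set.univ P)
    (hpos : ∀ z : Fin n → ℂ, 0 ≤ P z) (h0 : P 0 = 0)
    (hpoly : ∀ z w : Fin n → ℂ, ∃ q : Polynomial ℝ, ∀ t : ℝ, P (z + t • w) = q.eval t)
    (hnondeg : ∀ a b : Fin n → ℂ, b ≠ 0 → ∃ ζ : ℂ, P (a + ζ • b) ≠ 0) :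
    (∀ z w : Fin n → ℂ, P z = 0 → P w = 0 → P (z + w) = 0) ∧
    (∀ (z : Fin n → ℂ) (t : ℝ), P z = 0 → P (t • z) = 0) ∧
    (∀ z : Fin n → ℂ, P z = 0 → z ≠ 0 → P (Complex.I • z) ≠ 0) := by
  -- scalar invariance
  have hsmul : ∀ (z : Fin n → ℂ) (t : ℝ), P z = 0 → P (t • z) = 0 := by
    intro z t hz
    obtain ⟨q, hq⟩ := hpoly 0 z
    have hq' : ∀ s : ℝ, q.eval s = P (s • z) := by
      intro s; rw [← hq s, zero_add]
    have hq0 : ∀ s : ℝ, s ∈ Set.Icc (0:ℝ) 1 → q.eval s = 0 := by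
      intro s hs
      have h1 := hconv.2 (Set.mem_univ z) (Set.mem_univ 0) hs.1 (by linarith [hs.2])
        (by ring : s + (1 - s) = 1)
      simp only [smul_zero, add_zero, hz, h0, mul_zero] at h1
      have h2 : P (s • z) = 0 := le_antisymm (by simpa using h1) (hpos _)
      rw [hq', h2]
    have hqz : q = 0 := by
      apply Polynomial.eq_zero_of_infinite_isRoot
      exact Set.Infinite.mono (fun s hs => hq0 s hs) (Set.Icc_infinite one_pos)
    rw [← hq' t, hqz, Polynomial.eval_zero]
  -- additivity
  have hadd : ∀ z w : Fin n → ℂ, P z = 0 → P w = 0 → P (z + w) = 0 := by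
    intro z w hz hw
    have h1 := hconv.2 (Set.mem_univ z) (Set.mem_univ w)
      (by norm_num : (0:ℝ) ≤ 1/2) (by norm_num : (0:ℝ) ≤ 1/2) (by norm_num)
    rw [hz, hw] at h1
    have h2 : P ((1/2 : ℝ) • z + (1/2 : ℝ) • w) = 0 :=
      le_antisymm (by simpa using h1) (hpos _)
    have h3 : P ((1/2 : ℝ) • (z + w)) = 0 := by
      rwa [smul_add]
    have h4 := hsmul _ (2 : ℝ) h3
    rwa [smul_smul, show (2 : ℝ) * (1/2) = 1 by norm_num, one_smul] at h4
  refine ⟨hadd, hsmul, ?_⟩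
  intro z hz hzne hI
  obtain ⟨ζ, hζ⟩ := hnondeg 0 z hzne
  apply hζ
  have key : ζ • z = (ζ.re : ℝ) • z + (ζ.im : ℝ) • (Complex.I • z) := by
    ext i
    simp only [Pi.add_apply, Pi.smul_apply, smul_eq_mul, Complex.real_smul]
    conv_lhs => rw [← Complex.re_add_im ζ]
    ring
  rw [zero_add, key]
  exact hadd _ _ (hsmul z ζ.re hz) (hsmul _ ζ.im hI)
end

section
/- Let (X,d) be a proper geodesic metric space which is δ-hyperbolic for some δ ≥ 0, let p ∈ X and R > 0. Let (w_n) be a sequence in X going to infinity in the Gromov sense (i.e. (w_n|w_m)_p → ∞ as n,m → ∞) such that the functions x ↦ d(x,w_n) − d(w_n,p) converge pointwise on X to a function h : X → ℝ. Let (x_n) be a sequence in X with h(x_n) < log R for all n and d(x_n,p) → ∞. Then (x_n | w_n)_p → ∞ as n → ∞; that is, (x_n) converges to the same Gromov boundary point as (w_n), so the closure of the horoball { h < log R } meets the Gromov boundary only in that point. -/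
open Filter Metric Topology

/-- in a proper geodesic δ-hyperbolic space, if (w_n) goes to
infinity in the Gromov sense and defines a horofunction h, then every sequence
(x_n) in a horoball of h with d(x_n,p) → ∞ satisfies (x_n|w_n)_p → ∞, i.e. it
converges to the same Gromov boundary point as (w_n). -/
theorem horoball_closure_meets_boundary_in_one_point {X : Type*} [MetricSpace X]
    [ProperSpace X] (hX : IsGeodesicSpace X)
    (δ : ℝ) (hδ : 0 ≤ δ) (hhyp : IsDeltaHyperbolic X δ)
    (p : X) (R : ℝ) (hR : 0 < R)
    (w : ℕ → X)
    (hGromov : ∀ C > (0 : ℝ), ∃ N : ℕ, ∀ n ≥ N, ∀ m ≥ N, C ≤ gromovProduct p (w n) (w m))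
    (h : X → ℝ)
    (hconv : ∀ x : X, Tendsto (fun n => dist x (w n) - dist (w n) p) atTop (nhds (h x)))
    (x : ℕ → X) (hx : ∀ n : ℕ, h (x n) < Real.log R)
    (hxdiv : Tendsto (fun n => dist (x n) p) atTop atTop) :
    Tendsto (fun n => gromovProduct p (x n) (w n)) atTop atTop := by
  rw [Filter.tendsto_atTop]
  intro b
  set C : ℝ := max b 0 + δ + 1 with hC
  have hCpos : 0 < C := by
    have := le_max_right b 0
    simp only [hC]; linarith
  obtain ⟨N1, hN1⟩ := hGromov C hCpos
  have hx2 : ∀ᶠ n in atTop, 2 * C + Real.log R ≤ dist (x n) p :=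
    hxdiv.eventually_ge_atTop _
  rw [eventually_atTop] at hx2
  obtain ⟨N2, hN2⟩ := hx2
  rw [eventually_atTop]
  refine ⟨max N1 N2, fun n hn => ?_⟩
  have hn1 : N1 ≤ n := le_trans (le_max_left _ _) hn
  have hn2 : N2 ≤ n := le_trans (le_max_right _ _) hn
  have hlt : ∀ᶠ m in atTop, dist (x n) (w m) - dist (w m) p < Real.log R :=
    (hconv (x n)).eventually_lt_const (hx n)
  rw [eventually_atTop] at hlt
  obtain ⟨M, hM⟩ := hlt
  set m := max M N1 with hm
  have h1 : dist (x n) (w m) - dist (w m) p < Real.log R := hM m (le_max_left _ _)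
  have h2 : C ≤ gromovProduct p (w m) (w n) := hN1 m (le_max_right _ _) n hn1
  have h3 : C ≤ gromovProduct p (x n) (w m) := by
    have hd := hN2 n hn2
    simp only [gromovProduct]
    linarith
  have h4 := hhyp p (x n) (w n) (w m)
  have h5 : C ≤ min (gromovProduct p (x n) (w m)) (gromovProduct p (w m) (w n)) :=
    le_min h3 h2
  have hb := le_max_left b 0
  simp only [hC] at h5
  linarith
end
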